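/- arXiv:2011.10810 — 7 statements merged into one kernel-verified Lean document; each statement's English description precedes it below -/
import Mathlib

section
/- Let C_{n+1} be a positive definite symmetric Toeplitz (n+1)×(n+1) real matrix and let C_n be its upper-left n×n principal submatrix. Then (1/n)·tr(C_n⁻¹) ≤ (1/(n+1))·tr(C_{n+1}⁻¹). -/
open Matrix Finset

/-- The symmetric Toeplitz matrix of size n built from the sequence c. -/
def toeplitz (c : ℕ → ℝ) (n : ℕ) : Matrix (Fin n) (Fin n) ℝ :=
  Matrix.of fun i j => c ((i : ℤ) - (j : ℤ)).natAbs

section Aux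

variable {N n : ℕ}

/-- The 0/1 embedding matrix associated to `f`. -/
def embMat (f : Fin n → Fin N) : Matrix (Fin N) (Fin n) ℝ :=
  Matrix.of fun i j => if i = f j then 1 else 0

lemma embMat_mulVec_apply (f : Fin n → Fin N) (hf : Function.Injective f)
    (z : Fin n → ℝ) (k : Fin n) : (embMat f *ᵥ z) (f k) = z k := by
  simp [embMat, mulVec, dotProduct, hf.eq_iff, ite_mul]

lemma embMat_transpose_mul_mul (f : Fin n → Fin N) (M : Matrix (Fin N) (Fin N) ℝ) :
    (embMat f)ᵀ * M * embMat f = M.submatrix f f := by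
  ext a b
  simp [Matrix.mul_apply, embMat, ite_mul, mul_ite, Finset.sum_ite_eq']

lemma mulVec_dotProduct' (P : Matrix (Fin N) (Fin n) ℝ) (z : Fin n → ℝ) (u : Fin N → ℝ) :
    (P *ᵥ z) ⬝ᵥ u = z ⬝ᵥ (Pᵀ *ᵥ u) := by
  rw [dotProduct_comm, dotProduct_mulVec, ← Matrix.mulVec_transpose, dotProduct_comm]

lemma embMat_quad (f : Fin n → Fin N) (M : Matrix (Fin N) (Fin N) ℝ) (z : Fin n → ℝ) :
    (embMat f *ᵥ z) ⬝ᵥ (M *ᵥ (embMat f *ᵥ z)) = z ⬝ᵥ (M.submatrix f f *ᵥ z) := by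
  rw [mulVec_dotProduct', mulVec_mulVec, mulVec_mulVec, embMat_transpose_mul_mul]

lemma posDef_submatrix {M : Matrix (Fin N) (Fin N) ℝ} (hM : M.PosDef)
    (f : Fin n → Fin N) (hf : Function.Injective f) : (M.submatrix f f).PosDef := by
  refine Matrix.PosDef.of_dotProduct_mulVec_pos ?_ ?_
  · have h := hM.isHermitian
    unfold Matrix.IsHermitian at h ⊢
    rw [conjTranspose_submatrix, h]
  · intro x hx
    have hy : embMat f *ᵥ x ≠ 0 := by
      intro h
      apply hx
      funext j
      have := congrFun h (f j)
      rwa [embMat_mulVec_apply f hf, Pi.zero_apply] at this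
    have := hM.dotProduct_mulVec_pos hy
    rwa [star_trivial, embMat_quad, ← star_trivial x] at this

/-- Variational upper bound: `2 y_k - yᵀ M y ≤ (M⁻¹)_{kk}` for positive definite `M`. -/
lemma quad_le_inv_diag (M : Matrix (Fin N) (Fin N) ℝ) (hM : M.PosDef)
    (k : Fin N) (y : Fin N → ℝ) :
    2 * y k - y ⬝ᵥ (M *ᵥ y) ≤ M⁻¹ k k := by
  have hdet : IsUnit M.det := hM.det_pos.ne'.isUnit
  set w : Fin N → ℝ := M⁻¹ *ᵥ Pi.single k 1 with hw
  have hMw : M *ᵥ w = Pi.single k 1 := by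
    rw [hw, mulVec_mulVec, Matrix.mul_nonsing_inv _ hdet, one_mulVec]
  have hsym : Mᵀ = M := by
    have h := hM.isHermitian
    unfold Matrix.IsHermitian at h
    rwa [conjTranspose_eq_transpose_of_trivial] at h
  have e1 : y ⬝ᵥ (M *ᵥ w) = y k := by rw [hMw, dotProduct_single, mul_one]
  have e2 : w ⬝ᵥ (M *ᵥ y) = y k := by
    rw [dotProduct_mulVec, ← Matrix.mulVec_transpose, hsym, hMw, single_dotProduct, one_mul]
  have e3 : w ⬝ᵥ (M *ᵥ w) = M⁻¹ k k := by
    rw [hMw, dotProduct_single, mul_one, hw, mulVec_single]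
    simp
  have key : 0 ≤ (y - w) ⬝ᵥ (M *ᵥ (y - w)) := by
    have := hM.posSemidef.dotProduct_mulVec_nonneg (y - w)
    rwa [star_trivial] at this
  rw [mulVec_sub, dotProduct_sub, sub_dotProduct, sub_dotProduct, e1, e2, e3] at key
  linarith

/-- The bound is attained, so diagonal entries of inverses of nested positive definite
matrices compare. -/
lemma inv_diag_le {M : Matrix (Fin N) (Fin N) ℝ} (hM : M.PosDef)
    (f : Fin n → Fin N) (hf : Function.Injective f) (k : Fin n) :
    (M.submatrix f f)⁻¹ k k ≤ M⁻¹ (f k) (f k) := by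
  set A := M.submatrix f f with hAdef
  have hA : A.PosDef := posDef_submatrix hM f hf
  have hdetA : IsUnit A.det := hA.det_pos.ne'.isUnit
  set z : Fin n → ℝ := A⁻¹ *ᵥ Pi.single k 1 with hz
  have hAz : A *ᵥ z = Pi.single k 1 := by
    rw [hz, mulVec_mulVec, Matrix.mul_nonsing_inv _ hdetA, one_mulVec]
  have ez1 : z k = A⁻¹ k k := by rw [hz, mulVec_single]; simp
  have ez2 : z ⬝ᵥ (A *ᵥ z) = A⁻¹ k k := by
    rw [hAz, dotProduct_single, mul_one, ez1]
  have h := quad_le_inv_diag M hM (f k) (embMat f *ᵥ z)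
  rw [embMat_quad, embMat_mulVec_apply f hf, ← hAdef, ez2, ez1] at h
  linarith

end Aux

/-- For a positive definite symmetric Toeplitz (n+1)×(n+1) matrix C_{n+1} with
upper-left n×n principal submatrix C_n, the normalized trace-inverse is monotone:
(1/n)·tr(C_n⁻¹) ≤ (1/(n+1))·tr(C_{n+1}⁻¹). -/
theorem normalized_trace_inverse_monotone (n : ℕ) (hn : 0 < n) (c : ℕ → ℝ)
    (hPD : (toeplitz c (n + 1)).PosDef) :
    (1 / (n : ℝ)) * ((toeplitz c n)⁻¹).trace ≤
      (1 / ((n : ℝ) + 1)) * ((toeplitz c (n + 1))⁻¹).trace := by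
  set C := toeplitz c (n + 1) with hC
  set A := toeplitz c n with hA
  -- leading principal submatrix
  have hlead : C.submatrix Fin.castSucc Fin.castSucc = A := by
    ext i j
    simp only [hC, hA, toeplitz, Matrix.submatrix_apply, Matrix.of_apply]
    congr 2
  -- trailing principal submatrix
  have htrail : C.submatrix Fin.succ Fin.succ = A := by
    ext i j
    simp only [hC, hA, toeplitz, Matrix.submatrix_apply, Matrix.of_apply, Fin.val_succ]
    congr 2
    push_cast
    ring
  set a : Fin n → ℝ := fun j => A⁻¹ j j with ha
  set B : Fin (n + 1) → ℝ := fun k => C⁻¹ k k with hB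
  have h1 : ∀ j : Fin n, a j ≤ B (Fin.castSucc j) := by
    intro j
    have := inv_diag_le hPD Fin.castSucc (Fin.castSucc_injective n) j
    rwa [hlead] at this
  have h2 : ∀ j : Fin n, a j ≤ B (Fin.succ j) := by
    intro j
    have := inv_diag_le hPD Fin.succ (Fin.succ_injective n) j
    rwa [htrail] at this
  -- weighted combination
  have key : ((n : ℝ) + 1) * ∑ j, a j ≤ (n : ℝ) * ∑ k, B k := by
    have step1 : ((n : ℝ) + 1) * ∑ j, a j
        = ∑ j : Fin n, (((n : ℝ) - (j : ℕ)) * a j + (((j : ℕ) : ℝ) + 1) * a j) := by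
      rw [Finset.mul_sum]
      congr 1
      funext j
      ring
    have step2 : ∀ j : Fin n, ((n : ℝ) - (j : ℕ)) * a j + (((j : ℕ) : ℝ) + 1) * a j
        ≤ ((n : ℝ) - (j : ℕ)) * B (Fin.castSucc j) + (((j : ℕ) : ℝ) + 1) * B (Fin.succ j) := by
      intro j
      have hj : ((j : ℕ) : ℝ) ≤ (n : ℝ) := by exact_mod_cast (j.isLt.le)
      exact add_le_add (mul_le_mul_of_nonneg_left (h1 j) (by linarith))
        (mul_le_mul_of_nonneg_left (h2 j) (by positivity))
    have step3 : (∑ j : Fin n, ((n : ℝ) - (j : ℕ)) * B (Fin.castSucc j))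
        + (∑ j : Fin n, (((j : ℕ) : ℝ) + 1) * B (Fin.succ j)) = (n : ℝ) * ∑ k, B k := by
      have e1 : ∑ j : Fin n, ((n : ℝ) - (j : ℕ)) * B (Fin.castSucc j)
          = ∑ k : Fin (n + 1), ((n : ℝ) - (k : ℕ)) * B k := by
        rw [Fin.sum_univ_castSucc]
        simp
      have e2 : ∑ j : Fin n, (((j : ℕ) : ℝ) + 1) * B (Fin.succ j)
          = ∑ k : Fin (n + 1), ((k : ℕ) : ℝ) * B k := by
        rw [Fin.sum_univ_succ (f := fun k : Fin (n+1) => ((k : ℕ) : ℝ) * B k)]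
        simp [Fin.val_succ]
      rw [e1, e2, ← Finset.sum_add_distrib, Finset.mul_sum]
      congr 1
      funext k
      ring
    calc ((n : ℝ) + 1) * ∑ j, a j
        = ∑ j : Fin n, (((n : ℝ) - (j : ℕ)) * a j + (((j : ℕ) : ℝ) + 1) * a j) := step1
      _ ≤ ∑ j : Fin n, (((n : ℝ) - (j : ℕ)) * B (Fin.castSucc j)
            + (((j : ℕ) : ℝ) + 1) * B (Fin.succ j)) := Finset.sum_le_sum (fun j _ => step2 j)
      _ = (∑ j : Fin n, ((n : ℝ) - (j : ℕ)) * B (Fin.castSucc j))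
            + (∑ j : Fin n, (((j : ℕ) : ℝ) + 1) * B (Fin.succ j)) := Finset.sum_add_distrib
      _ = (n : ℝ) * ∑ k, B k := step3
  have hTA : A⁻¹.trace = ∑ j, a j := by simp [Matrix.trace, Matrix.diag, ha]
  have hTB : C⁻¹.trace = ∑ k, B k := by simp [Matrix.trace, Matrix.diag, hB]
  rw [hTA, hTB]
  have hn' : (0 : ℝ) < n := by exact_mod_cast hn
  have hn2 : (0 : ℝ) < (n : ℝ) + 1 := by linarith
  rw [div_mul_eq_mul_div, div_mul_eq_mul_div, div_le_div_iff₀ hn' hn2]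
  nlinarith [key]
end

section
/- Let C_{n+1} be a positive definite symmetric Toeplitz (n+1)×(n+1) matrix with C_n its upper-left n×n principal submatrix. Then (1/n)tr(C_n⁻¹) = (1/(n+1))tr(C_{n+1}⁻¹) if and only if C_{n+1} = c_0 · I_{n+1}, i.e., the Toeplitz coefficients satisfy c_1 = c_2 = ⋯ = c_n = 0. -/
open Matrix Finset

lemma sum_extend_mul {n m : ℕ} (f : Fin n → Fin m) (hf : Function.Injective f)
    (u : Fin n → ℝ) (g : Fin m → ℝ) :
    ∑ i, Function.extend f u 0 i * g i = ∑ k, u k * g (f k) := by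
  classical
  rw [← Finset.sum_subset (Finset.subset_univ (Finset.univ.image f))
      (fun i _ hi => by
        rw [Function.extend_apply' _ _ _ (fun ⟨k, hk⟩ => hi (Finset.mem_image.mpr ⟨k, Finset.mem_univ k, hk⟩))]
        simp),
    Finset.sum_image (fun x _ y _ h => hf h)]
  exact Finset.sum_congr rfl fun k _ => by rw [hf.extend_apply]

lemma quad_extend {n m : ℕ} (A : Matrix (Fin m) (Fin m) ℝ) (f : Fin n → Fin m)
    (hf : Function.Injective f) (u : Fin n → ℝ) :
    Function.extend f u 0 ⬝ᵥ (A *ᵥ Function.extend f u 0) = u ⬝ᵥ ((A.submatrix f f) *ᵥ u) := by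
  rw [dotProduct, sum_extend_mul f hf]
  refine Finset.sum_congr rfl fun k _ => ?_
  congr 1
  show (fun i => ∑ j, A i j * Function.extend f u 0 j) (f k) = _
  simp only []
  rw [show ∑ j, A (f k) j * Function.extend f u 0 j
      = ∑ j, Function.extend f u 0 j * A (f k) j from Finset.sum_congr rfl fun j _ => mul_comm _ _,
    sum_extend_mul f hf]
  simp [Matrix.mulVec, dotProduct, Matrix.submatrix, mul_comm]

lemma posdef_submatrix {n m : ℕ} {A : Matrix (Fin m) (Fin m) ℝ} (hA : A.PosDef)
    (f : Fin n → Fin m) (hf : Function.Injective f) : (A.submatrix f f).PosDef := by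
  refine Matrix.PosDef.of_dotProduct_mulVec_pos (hA.1.submatrix f) fun x hx => ?_
  have h := hA.dotProduct_mulVec_pos (x := Function.extend f x 0) ?_
  · rw [star_trivial] at h ⊢
    rwa [quad_extend A f hf x] at h
  · intro h0
    obtain ⟨k, hk⟩ := Function.ne_iff.mp hx
    exact hk (by rw [← hf.extend_apply (g := x) (e' := 0) k, h0]; rfl)

lemma diag_inv_key {n m : ℕ} {A : Matrix (Fin m) (Fin m) ℝ} (hA : A.PosDef)
    (f : Fin n → Fin m) (hf : Function.Injective f) (k : Fin n) :
    (A.submatrix f f)⁻¹ k k ≤ A⁻¹ (f k) (f k) ∧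
    ((A.submatrix f f)⁻¹ k k = A⁻¹ (f k) (f k) →
      A *ᵥ Function.extend f ((A.submatrix f f)⁻¹ *ᵥ Pi.single k 1) 0 = Pi.single (f k) 1) := by
  classical
  set P := A.submatrix f f with hPdef
  have hP : P.PosDef := posdef_submatrix hA f hf
  set u : Fin n → ℝ := P⁻¹ *ᵥ Pi.single k 1 with hu
  set v : Fin m → ℝ := Function.extend f u 0 with hv
  set z : Fin m → ℝ := A⁻¹ *ᵥ Pi.single (f k) 1 with hz
  have hAz : A *ᵥ z = Pi.single (f k) 1 := by
    rw [hz, Matrix.mulVec_mulVec, Matrix.mul_nonsing_inv _ hA.det_pos.ne'.isUnit, Matrix.one_mulVec]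
  have hPu : P *ᵥ u = Pi.single k 1 := by
    rw [hu, Matrix.mulVec_mulVec, Matrix.mul_nonsing_inv _ hP.det_pos.ne'.isUnit, Matrix.one_mulVec]
  have hzk : z (f k) = A⁻¹ (f k) (f k) := by
    rw [hz, Matrix.mulVec_single]; simp
  have huk : u k = P⁻¹ k k := by
    rw [hu, Matrix.mulVec_single]; simp
  have hvfk : v (f k) = u k := hf.extend_apply _ _ _
  have hsym : Aᵀ = A := hA.1
  -- quadratic form of w = z - v
  have hQ : (z - v) ⬝ᵥ (A *ᵥ (z - v)) = A⁻¹ (f k) (f k) - P⁻¹ k k := by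
    have hvAv : v ⬝ᵥ (A *ᵥ v) = P⁻¹ k k := by
      rw [hv, quad_extend A f hf, ← hPdef, hPu, dotProduct_single, mul_one, huk]
    have hvAz : v ⬝ᵥ (A *ᵥ z) = P⁻¹ k k := by
      rw [hAz, dotProduct_single, mul_one, hvfk, huk]
    have hzAv : z ⬝ᵥ (A *ᵥ v) = P⁻¹ k k := by
      rw [Matrix.dotProduct_mulVec, ← Matrix.mulVec_transpose, hsym, hAz,
        single_dotProduct, one_mul, hvfk, huk]
    rw [Matrix.mulVec_sub, dotProduct_sub, sub_dotProduct,
      sub_dotProduct, hAz, hzAv, hvAv, dotProduct_single,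
      dotProduct_single, mul_one, mul_one, hzk, hvfk, huk]
    ring
  have hge : 0 ≤ A⁻¹ (f k) (f k) - P⁻¹ k k := by
    have := hA.posSemidef.dotProduct_mulVec_nonneg (z - v)
    rwa [star_trivial, hQ] at this
  refine ⟨by linarith, fun heq => ?_⟩
  have hw0 : z - v = 0 := by
    by_contra hne
    have := hA.dotProduct_mulVec_pos hne
    rw [star_trivial, hQ, heq] at this
    simp at this
  have : v = z := by rwa [sub_eq_zero, eq_comm] at hw0
  rw [this]; exact hAz

lemma toeplitz_eq_smul_one {c : ℕ → ℝ} {m : ℕ} (h : ∀ d, 1 ≤ d → d < m → c d = 0) :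
    toeplitz c m = c 0 • (1 : Matrix (Fin m) (Fin m) ℝ) := by
  ext i j
  by_cases hij : i = j
  · subst hij
    simp [toeplitz, Matrix.one_apply]
  · have h1 : ((i : ℤ) - (j : ℤ)).natAbs ≠ 0 := by
      intro h0
      exact hij (Fin.ext (by omega))
    have h2 : ((i : ℤ) - (j : ℤ)).natAbs < m := by
      have := i.isLt; have := j.isLt; omega
    simp [toeplitz, Matrix.one_apply, hij, h _ (by omega) h2]

lemma smul_one_inv_trace {m : ℕ} {c0 : ℝ} (hc0 : c0 ≠ 0) :
    ((c0 • (1 : Matrix (Fin m) (Fin m) ℝ))⁻¹).trace = c0⁻¹ * m := by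
  have hinv : (c0 • (1 : Matrix (Fin m) (Fin m) ℝ))⁻¹ = c0⁻¹ • 1 := by
    apply Matrix.inv_eq_right_inv
    rw [smul_mul_assoc, Matrix.mul_smul, one_mul, smul_smul, mul_inv_cancel₀ hc0, one_smul]
  rw [hinv, Matrix.trace_smul, Matrix.trace_one, smul_eq_mul, Fintype.card_fin]

/-- For a positive definite symmetric Toeplitz (n+1)×(n+1) matrix C_{n+1} with
upper-left block C_n, equality (1/n)tr(C_n⁻¹) = (1/(n+1))tr(C_{n+1}⁻¹) holds if and only if
C_{n+1} = c_0 · I, i.e. iff c_1 = ⋯ = c_n = 0. -/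
theorem normalized_trace_inverse_eq_iff (n : ℕ) (hn : 0 < n) (c : ℕ → ℝ)
    (hPD : (toeplitz c (n + 1)).PosDef) :
    (1 / (n : ℝ)) * ((toeplitz c n)⁻¹).trace =
        (1 / ((n : ℝ) + 1)) * ((toeplitz c (n + 1))⁻¹).trace ↔
      toeplitz c (n + 1) = c 0 • (1 : Matrix (Fin (n + 1)) (Fin (n + 1)) ℝ) := by
  classical
  have hn' : (n : ℝ) ≠ 0 := Nat.cast_ne_zero.mpr hn.ne'
  have hn1 : (n : ℝ) + 1 ≠ 0 := by positivity
  have hc0 : 0 < c 0 := by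
    have hx : (Pi.single (0 : Fin (n+1)) (1:ℝ) : Fin (n+1) → ℝ) ≠ 0 := by
      intro h
      have h0 := congrFun h (0 : Fin (n+1))
      rw [Pi.single_eq_same] at h0
      exact one_ne_zero (h0.trans rfl)
    have h := hPD.dotProduct_mulVec_pos hx
    rw [star_trivial] at h
    simpa [Matrix.mulVec_single, single_dotProduct, toeplitz] using h
  have hcast : (toeplitz c (n+1)).submatrix Fin.castSucc Fin.castSucc = toeplitz c n := by
    ext i j
    rfl
  have hsucc : (toeplitz c (n+1)).submatrix Fin.succ Fin.succ = toeplitz c n := by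
    ext i j
    simp only [Matrix.submatrix_apply, toeplitz, Matrix.of_apply]
    congr 1
    simp only [Fin.val_succ]
    push_cast
    omega
  set A := toeplitz c (n+1) with hAdef
  set P := toeplitz c n with hPdef
  have hPpd : P.PosDef := hcast ▸ posdef_submatrix hPD _ (Fin.castSucc_injective n)
  have htrA : A⁻¹.trace = ∑ m, A⁻¹ m m := rfl
  have htrP : P⁻¹.trace = ∑ k, P⁻¹ k k := rfl
  constructor
  · intro hEq
    have key1 : ∀ k : Fin n, P⁻¹ k k ≤ A⁻¹ (Fin.castSucc k) (Fin.castSucc k) ∧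
        (P⁻¹ k k = A⁻¹ (Fin.castSucc k) (Fin.castSucc k) →
          A *ᵥ Function.extend Fin.castSucc (P⁻¹ *ᵥ Pi.single k 1) 0
            = Pi.single (Fin.castSucc k) 1) := by
      intro k
      have h := diag_inv_key hPD Fin.castSucc (Fin.castSucc_injective n) k
      rwa [hcast] at h
    have key2 : ∀ k : Fin n, P⁻¹ k k ≤ A⁻¹ k.succ k.succ := by
      intro k
      have h := (diag_inv_key hPD Fin.succ (Fin.succ_injective n) k).1
      rwa [hsucc] at h
    have htr : (n:ℝ) * ∑ m, A⁻¹ m m = ((n:ℝ)+1) * ∑ k, P⁻¹ k k := by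
      rw [htrA, htrP] at hEq
      rw [one_div_mul_eq_div, one_div_mul_eq_div, div_eq_div_iff hn' hn1] at hEq
      linarith
    have hsum1 : ∑ m : Fin (n+1), ((n:ℝ) - m.val) * A⁻¹ m m
        = ∑ k : Fin n, ((n:ℝ) - k.val) * A⁻¹ k.castSucc k.castSucc := by
      rw [Fin.sum_univ_castSucc]
      simp
    have hsum2 : ∑ m : Fin (n+1), (m.val:ℝ) * A⁻¹ m m
        = ∑ k : Fin n, ((k.val:ℝ)+1) * A⁻¹ k.succ k.succ := by
      rw [Fin.sum_univ_succ]
      simp [Fin.val_succ]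
    have main : (∑ k : Fin n, (((n:ℝ) - k.val) * (A⁻¹ k.castSucc k.castSucc - P⁻¹ k k)
          + ((k.val:ℝ)+1) * (A⁻¹ k.succ k.succ - P⁻¹ k k)))
          + ((n:ℝ)+1) * ∑ k, P⁻¹ k k = (n:ℝ) * ∑ m, A⁻¹ m m := by
      rw [Finset.mul_sum, ← Finset.sum_add_distrib]
      rw [Finset.sum_congr rfl (fun k _ => show _ = ((n:ℝ) - k.val) * A⁻¹ k.castSucc k.castSucc
        + ((k.val:ℝ)+1) * A⁻¹ k.succ k.succ from by ring)]
      rw [Finset.sum_add_distrib, ← hsum1, ← hsum2, ← Finset.sum_add_distrib, Finset.mul_sum]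
      exact Finset.sum_congr rfl (fun m _ => by ring)
    have hS : ∑ k : Fin n, (((n:ℝ) - k.val) * (A⁻¹ k.castSucc k.castSucc - P⁻¹ k k)
          + ((k.val:ℝ)+1) * (A⁻¹ k.succ k.succ - P⁻¹ k k)) = 0 := by linarith
    have hnn : ∀ k ∈ Finset.univ, (0:ℝ) ≤ ((n:ℝ) - k.val) * (A⁻¹ k.castSucc k.castSucc - P⁻¹ k k)
          + ((k.val:ℝ)+1) * (A⁻¹ k.succ k.succ - P⁻¹ k k) := by
      intro k _
      have hk : (k.val : ℝ) < n := by exact_mod_cast k.isLt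
      have h1 := (key1 k).1
      have h2 := key2 k
      have : (0:ℝ) ≤ ((n:ℝ) - k.val) * (A⁻¹ k.castSucc k.castSucc - P⁻¹ k k) :=
        mul_nonneg (by linarith) (by linarith)
      have : (0:ℝ) ≤ ((k.val:ℝ)+1) * (A⁻¹ k.succ k.succ - P⁻¹ k k) :=
        mul_nonneg (by positivity) (by linarith)
      linarith
    have hzero := (Finset.sum_eq_zero_iff_of_nonneg hnn).mp hS
    have heqd : ∀ k : Fin n, P⁻¹ k k = A⁻¹ k.castSucc k.castSucc := by
      intro k
      have hz := hzero k (Finset.mem_univ k)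
      have hk : (k.val : ℝ) < n := by exact_mod_cast k.isLt
      have h1 := (key1 k).1
      have h2 := key2 k
      have t2 : (0:ℝ) ≤ ((k.val:ℝ)+1) * (A⁻¹ k.succ k.succ - P⁻¹ k k) :=
        mul_nonneg (by positivity) (by linarith)
      have t1 : ((n:ℝ) - k.val) * (A⁻¹ k.castSucc k.castSucc - P⁻¹ k k) = 0 := by
        have t1' : (0:ℝ) ≤ ((n:ℝ) - k.val) * (A⁻¹ k.castSucc k.castSucc - P⁻¹ k k) :=
          mul_nonneg (by linarith) (by linarith)
        linarith
      rcases mul_eq_zero.mp t1 with h | h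
      · exact absurd h (by intro h'; linarith)
      · linarith
    have hveq : ∀ k : Fin n,
        A *ᵥ Function.extend Fin.castSucc (P⁻¹ *ᵥ Pi.single k 1) 0
          = Pi.single (Fin.castSucc k) 1 := fun k => (key1 k).2 (heqd k)
    set b : Fin n → ℝ := fun m => A (Fin.last n) (Fin.castSucc m) with hbdef
    have hbP : b ᵥ* P⁻¹ = 0 := by
      funext k
      have h := congrFun (hveq k) (Fin.last n)
      have hne : Fin.castSucc k ≠ Fin.last n := Fin.ne_of_lt (Fin.castSucc_lt_last k)
      rw [Pi.single_eq_of_ne (Ne.symm hne) 1] at h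
      have hL : (A *ᵥ Function.extend Fin.castSucc (P⁻¹ *ᵥ Pi.single k 1) 0) (Fin.last n)
          = ∑ m, (P⁻¹ *ᵥ Pi.single k 1) m * b m := by
        show ∑ j, A (Fin.last n) j * Function.extend Fin.castSucc (P⁻¹ *ᵥ Pi.single k 1) 0 j = _
        rw [Finset.sum_congr rfl (fun j _ => mul_comm (A (Fin.last n) j) _)]
        exact sum_extend_mul _ (Fin.castSucc_injective n) _ _
      rw [hL] at h
      show ∑ m, b m * P⁻¹ m k = 0
      rw [← h]
      refine Finset.sum_congr rfl (fun m _ => ?_)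
      rw [Matrix.mulVec_single]
      simp [mul_comm]
    have hb0 : b = 0 := by
      have h := congrArg (· ᵥ* P) hbP
      simpa [Matrix.vecMul_vecMul, Matrix.nonsing_inv_mul P hPpd.det_pos.ne'.isUnit,
        Matrix.vecMul_one, Matrix.zero_vecMul] using h
    have hvanish : ∀ d, 1 ≤ d → d < n + 1 → c d = 0 := by
      intro d h1 h2
      have hm := congrFun hb0 ⟨n - d, by omega⟩
      rw [hbdef] at hm
      simp only [hAdef, toeplitz, Matrix.of_apply, Pi.zero_apply] at hm
      have hval : (((Fin.last n : Fin (n+1)) : ℤ)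
          - ((Fin.castSucc (⟨n - d, by omega⟩ : Fin n) : Fin (n+1)) : ℤ)).natAbs = d := by
        simp [Fin.last, Fin.coe_castSucc]
        omega
      rwa [hval] at hm
    exact toeplitz_eq_smul_one hvanish
  · intro hA
    have hvanish : ∀ d, 1 ≤ d → d < n + 1 → c d = 0 := by
      intro d h1 h2
      have h := congrFun (congrFun hA ⟨d, h2⟩) ⟨0, n.succ_pos⟩
      have hne : (⟨d, h2⟩ : Fin (n+1)) ≠ 0 := by
        simp only [Fin.ne_iff_vne, Fin.val_zero]; omega
      simpa [hAdef, toeplitz, Matrix.one_apply, hne] using h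
    have hPn : P = c 0 • 1 :=
      toeplitz_eq_smul_one (fun d h1 h2 => hvanish d h1 (by omega))
    rw [hA, hPn, smul_one_inv_trace hc0.ne', smul_one_inv_trace hc0.ne']
    push_cast
    field_simp
end

section
/- Let C be a positive definite symmetric Toeplitz n×n matrix. For any indices i ≤ j in {1,…,n}, the linear MMSE of coordinate i from coordinates {1,…,n}∖{i} is at least the linear MMSE of coordinate i from coordinates {1,…,n+1}∖{i}, for any positive definite symmetric Toeplitz extension C' of C to size (n+1)×(n+1). Equivalently, [C⁻¹]_{i,i} ≤ [C'⁻¹]_{i,i}. -/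
open Matrix Finset

/-- Diagonal entries of the inverse of a real positive definite matrix are positive. -/
lemma inv_diag_pos {m : Type*} [Fintype m] [DecidableEq m]
    {M : Matrix m m ℝ} (hM : M.PosDef) (i : m) : 0 < M⁻¹ i i := by
  exact hM.inv.diag_pos

/-- The quadratic-form lower bound: if `x i = 1` then `1 ≤ M⁻¹ i i * (xᵀ M x)`. -/
lemma one_le_invdiag_mul_quad {m : Type*} [Fintype m] [DecidableEq m]
    {M : Matrix m m ℝ} (hM : M.PosDef) (i : m) (x : m → ℝ) (hx : x i = 1) :
    1 ≤ M⁻¹ i i * (x ⬝ᵥ M *ᵥ x) := by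
  classical
  have hαpos : 0 < M⁻¹ i i := inv_diag_pos hM i
  set α : ℝ := M⁻¹ i i with hα
  have hUnit : IsUnit M.det := hM.det_pos.ne'.isUnit
  set e : m → ℝ := Pi.single i 1 with he
  set u : m → ℝ := (1 / α) • (M⁻¹ *ᵥ e) with hu
  have hMu : M *ᵥ u = (1 / α) • e := by
    rw [hu, mulVec_smul, mulVec_mulVec, Matrix.mul_nonsing_inv _ hUnit, one_mulVec]
  have hMinvi : (M⁻¹ *ᵥ e) i = α := by
    simp [he, mulVec, dotProduct, Pi.single_apply, hα]
  have hui : u i = 1 := by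
    rw [hu]
    simp only [Pi.smul_apply, hMinvi, smul_eq_mul]
    field_simp
  set y : m → ℝ := x - u with hy
  have hsym : Mᵀ = M := hM.isHermitian
  have hswap : ∀ v : m → ℝ, M *ᵥ v = v ᵥ* M := fun v => by
    rw [← mulVec_transpose, hsym]
  have cross' : y ⬝ᵥ M *ᵥ u = 0 := by
    rw [hMu, dotProduct_smul]
    have : y ⬝ᵥ e = 0 := by
      simp [he, hy, dotProduct, Pi.single_apply, hx, hui]
    rw [this, smul_zero]
  have cross : u ⬝ᵥ M *ᵥ y = 0 := by
    rw [dotProduct_comm, hswap y, ← dotProduct_mulVec]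
    exact cross'
  have huu : u ⬝ᵥ M *ᵥ u = 1 / α := by
    rw [hMu, dotProduct_smul]
    have : u ⬝ᵥ e = 1 := by simp [he, dotProduct, Pi.single_apply, hui]
    rw [this]; simp
  have hyy : 0 ≤ y ⬝ᵥ M *ᵥ y := hM.posSemidef.re_dotProduct_nonneg y
  have hexp : x ⬝ᵥ M *ᵥ x = y ⬝ᵥ M *ᵥ y + 1 / α := by
    have hxyu : x = y + u := by rw [hy]; ext j; simp
    rw [hxyu, mulVec_add, dotProduct_add, add_dotProduct, add_dotProduct, cross, cross', huu]
    ring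
  rw [hexp, mul_add]
  have h1 : α * (1 / α) = 1 := by field_simp
  nlinarith [hyy, hαpos]

/-- If C is a positive definite symmetric Toeplitz n×n matrix and C' is any
positive definite symmetric Toeplitz (n+1)×(n+1) extension of it (same Toeplitz sequence),
then for every index i, [C⁻¹]_{i,i} ≤ [C'⁻¹]_{i,i}: adding a measurement cannot increase
the LMMSE, i.e. the LMMSE of coordinate i from the other coordinates of {1,…,n} is at least
that from the other coordinates of {1,…,n+1}. -/
theorem inv_diag_mono_of_toeplitz_extension (n : ℕ) (c : ℕ → ℝ)
    (hC : (toeplitz c n).PosDef) (hC' : (toeplitz c (n + 1)).PosDef) (i : Fin n) :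
    (toeplitz c n)⁻¹ i i ≤ (toeplitz c (n + 1))⁻¹ i.castSucc i.castSucc := by
  classical
  have hβpos : 0 < (toeplitz c n)⁻¹ i i := inv_diag_pos hC i
  set β : ℝ := (toeplitz c n)⁻¹ i i with hβ
  have hUnit : IsUnit (toeplitz c n).det := hC.det_pos.ne'.isUnit
  set e : Fin n → ℝ := Pi.single i 1 with he
  set xh : Fin n → ℝ := (1 / β) • ((toeplitz c n)⁻¹ *ᵥ e) with hxh
  have hCx : toeplitz c n *ᵥ xh = (1 / β) • e := by
    rw [hxh, mulVec_smul, mulVec_mulVec, Matrix.mul_nonsing_inv _ hUnit, one_mulVec]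
  have hxi : xh i = 1 := by
    have h1 : ((toeplitz c n)⁻¹ *ᵥ e) i = β := by
      simp [he, mulVec, dotProduct, Pi.single_apply, hβ]
    rw [hxh]
    simp only [Pi.smul_apply, h1, smul_eq_mul]
    field_simp
  set x : Fin (n + 1) → ℝ := Fin.snoc xh 0 with hxdef
  have hxci : x i.castSucc = 1 := by simp [hxdef, Fin.snoc_castSucc, hxi]
  have entry : ∀ (j k : Fin n),
      toeplitz c (n + 1) j.castSucc k.castSucc = toeplitz c n j k := by
    intro j k
    simp only [toeplitz, Matrix.of_apply, Fin.coe_castSucc]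
  have hquad : x ⬝ᵥ toeplitz c (n + 1) *ᵥ x = xh ⬝ᵥ toeplitz c n *ᵥ xh := by
    simp only [dotProduct, mulVec]
    rw [Fin.sum_univ_castSucc]
    simp only [hxdef, Fin.snoc_castSucc, Fin.snoc_last, zero_mul, add_zero]
    refine Finset.sum_congr rfl fun j _ => ?_
    congr 1
    rw [Fin.sum_univ_castSucc]
    simp only [Fin.snoc_castSucc, Fin.snoc_last, mul_zero, add_zero]
    exact Finset.sum_congr rfl fun k _ => by rw [entry j k]
  have hquadval : xh ⬝ᵥ toeplitz c n *ᵥ xh = 1 / β := by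
    rw [hCx, dotProduct_smul]
    have : xh ⬝ᵥ e = 1 := by simp [he, dotProduct, Pi.single_apply, hxi]
    rw [this]; simp
  have key := one_le_invdiag_mul_quad hC' i.castSucc x hxci
  rw [hquad, hquadval] at key
  have hαpos : 0 < (toeplitz c (n + 1))⁻¹ i.castSucc i.castSucc := inv_diag_pos hC' i.castSucc
  rw [mul_one_div, le_div_iff₀ hβpos, one_mul] at key
  linarith
end

section
/- Let a_0 = 1, a_1, …, a_p be real numbers and σ² > 0, and let C_n (n ≥ p) be the covariance matrix of n consecutive samples of the stationary AR(p) process with these coefficients and innovation variance σ². Then for 1 ≤ i ≤ j ≤ n, σ²·[C_n⁻¹]_{i,j} = Σ_{ℓ=0}^{i−1} a_ℓ a_{ℓ+j−i} − Σ_{ℓ=n+1−j}^{n+i−j} a_ℓ a_{ℓ+j−i}, where a_ℓ := 0 for ℓ > p, and C_n⁻¹ is symmetric. -/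
open Matrix Finset

section AuxLemmas



/-- strictly upper triangular matrices are nilpotent -/
lemma strictUpper_pow_eq_zero {n : ℕ} (D : Matrix (Fin n) (Fin n) ℝ)
    (h : ∀ r c : Fin n, (c : ℕ) ≤ (r : ℕ) → D r c = 0) : D ^ n = 0 := by
  have key : ∀ m : ℕ, ∀ r c : Fin n, (c : ℕ) < (r : ℕ) + m → (D ^ m) r c = 0 := by
    intro m
    induction m with
    | zero =>
      intro r c hrc
      simp only [pow_zero, Matrix.one_apply]
      rw [if_neg]
      rintro rfl; omega
    | succ m ih =>
      intro r c hrc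
      rw [pow_succ, Matrix.mul_apply]
      apply Finset.sum_eq_zero
      intro t _
      by_cases ht : (c : ℕ) ≤ (t : ℕ)
      · rw [h t c ht, mul_zero]
      · rw [ih r t (by omega), zero_mul]
  ext r c
  rw [key n r c (by omega)]
  simp

lemma symm_sq_eq_zero {n : ℕ} (T : Matrix (Fin n) (Fin n) ℝ) (hT : Tᵀ = T)
    (h : T * T = 0) : T = 0 := by
  have hsym : ∀ k r : Fin n, T k r = T r k := by
    intro k r
    calc T k r = Tᵀ r k := (Matrix.transpose_apply T r k).symm
    _ = T r k := by rw [hT]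
  ext r s
  have hdiag : ∑ k : Fin n, T r k * T r k = 0 := by
    have := congrFun (congrFun h r) r
    rw [Matrix.mul_apply, Matrix.zero_apply] at this
    rw [← this]
    exact Finset.sum_congr rfl fun k _ => by rw [hsym k r]
  have hz : ∀ k ∈ Finset.univ, T r k * T r k = 0 := by
    refine (Finset.sum_eq_zero_iff_of_nonneg fun k _ => mul_self_nonneg _).1 hdiag
  have := hz s (Finset.mem_univ s)
  simpa [mul_self_eq_zero] using this

lemma symm_nilpotent_eq_zero {n : ℕ} (T : Matrix (Fin n) (Fin n) ℝ) (hT : Tᵀ = T) :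
    ∀ m : ℕ, T ^ (2 ^ m) = 0 → T = 0 := by
  intro m
  induction m with
  | zero => intro h; simpa using h
  | succ m ih =>
    intro h
    apply ih
    apply symm_sq_eq_zero _ (by rw [Matrix.transpose_pow, hT])
    rw [← pow_add, ← two_mul, ← pow_succ']
    exact h

lemma symm_nilpotent_eq_zero' {n : ℕ} (T : Matrix (Fin n) (Fin n) ℝ) (hT : Tᵀ = T)
    (h : T ^ n = 0) : T = 0 := by
  apply symm_nilpotent_eq_zero T hT n
  have hle : n ≤ 2 ^ n := Nat.le_of_lt Nat.lt_two_pow_self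
  calc T ^ (2 ^ n) = T ^ n * T ^ (2 ^ n - n) := by rw [← pow_add]; congr 1; omega
  _ = 0 := by rw [h, zero_mul]

open scoped MatrixOrder in
lemma strictUpper_comm_posDef_eq_zero {n : ℕ} (C D : Matrix (Fin n) (Fin n) ℝ)
    (hC : C.PosDef) (hR2' : Cᵀ = C)
    (htri : ∀ r c : Fin n, (c : ℕ) ≤ (r : ℕ) → D r c = 0)
    (hcomm : D * C = C * Dᵀ) : D = 0 := by
  classical
  set R := CFC.sqrt C with hRdef
  have hR2 : R * R = C := CFC.sqrt_mul_sqrt_self C hC.posSemidef.nonneg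
  have hRsymm : Rᵀ = R := by
    have := (CFC.sqrt_nonneg C).posSemidef.1
    rw [Matrix.IsHermitian, conjTranspose_eq_transpose_of_trivial] at this
    exact this
  have hdetR : IsUnit R.det := by
    have hdc : 0 < C.det := hC.det_pos
    rw [← hR2, Matrix.det_mul] at hdc
    exact isUnit_iff_ne_zero.2 fun h0 => by rw [h0, mul_zero] at hdc; exact lt_irrefl _ hdc
  have hRR : R * R⁻¹ = 1 := Matrix.mul_nonsing_inv R hdetR
  have hRR' : R⁻¹ * R = 1 := Matrix.nonsing_inv_mul R hdetR
  set T := R⁻¹ * D * R with hTdef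
  have hTpow : ∀ m : ℕ, T ^ m = R⁻¹ * D ^ m * R := by
    intro m
    induction m with
    | zero => simp [hRR']
    | succ m ih =>
      rw [pow_succ, ih, pow_succ, hTdef]
      calc R⁻¹ * D ^ m * R * (R⁻¹ * D * R) = R⁻¹ * D ^ m * (R * R⁻¹) * D * R := by
            simp only [Matrix.mul_assoc]
      _ = R⁻¹ * (D ^ m * D) * R := by rw [hRR]; simp only [Matrix.mul_assoc, Matrix.mul_one]
  have hDn : D ^ n = 0 := strictUpper_pow_eq_zero D htri
  have hTn : T ^ n = 0 := by rw [hTpow n, hDn, Matrix.mul_zero, Matrix.zero_mul]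
  have hTsymm : Tᵀ = T := by
    have h1 : Tᵀ = R * Dᵀ * R⁻¹ := by
      rw [hTdef, Matrix.transpose_mul, Matrix.transpose_mul, Matrix.transpose_nonsing_inv,
        hRsymm, Matrix.mul_assoc]
    have h2 : R * Tᵀ * R = R * T * R := by
      rw [h1, hTdef]
      calc R * (R * Dᵀ * R⁻¹) * R = (R * R) * Dᵀ * (R⁻¹ * R) := by
            simp only [Matrix.mul_assoc]
      _ = C * Dᵀ := by rw [hR2, hRR', Matrix.mul_one]
      _ = D * C := hcomm.symm
      _ = (R * R⁻¹) * D * (R * R) := by rw [hRR, hR2, Matrix.one_mul]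
      _ = R * (R⁻¹ * D * R) * R := by simp only [Matrix.mul_assoc]
    calc Tᵀ = (R⁻¹ * R) * Tᵀ * (R * R⁻¹) := by rw [hRR, hRR']; simp
    _ = R⁻¹ * (R * Tᵀ * R) * R⁻¹ := by simp only [Matrix.mul_assoc]
    _ = R⁻¹ * (R * T * R) * R⁻¹ := by rw [h2]
    _ = (R⁻¹ * R) * T * (R * R⁻¹) := by simp only [Matrix.mul_assoc]
    _ = T := by rw [hRR, hRR']; simp
  have hT0 : T = 0 := symm_nilpotent_eq_zero' T hTsymm hTn
  have : D = R * T * R⁻¹ := by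
    rw [hTdef]
    calc D = (R * R⁻¹) * D * (R * R⁻¹) := by rw [hRR]; simp
    _ = R * (R⁻¹ * D * R) * R⁻¹ := by simp only [Matrix.mul_assoc]
  rw [this, hT0, Matrix.mul_zero, Matrix.zero_mul]

lemma PF_lemma (p n : ℕ) (hpn : p ≤ n) (a : ℕ → ℝ) (σ2 : ℝ)
    (hap : ∀ ℓ, p < ℓ → a ℓ = 0) (c : ℕ → ℝ)
    (hYW : ∀ k : ℕ, ∑ ℓ ∈ Finset.range (p + 1), a ℓ * c ((k : ℤ) - (ℓ : ℤ)).natAbs =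
      if k = 0 then σ2 else 0)
    (j k : ℕ) (hk : k ≤ j) (hjn : j < n) :
    ∑ m ∈ range n, c ((j : ℤ) - m).natAbs * (if k ≤ m then a (m - k) else 0)
      = (if k = j then σ2 else 0) - ∑ ℓ ∈ Icc (n - k) n, a ℓ * c ((j : ℤ) - k - ℓ).natAbs := by
  have hkn : k ≤ n := by omega
  -- step 1: restrict to Ico k n
  have s1 : ∑ m ∈ range n, c ((j : ℤ) - m).natAbs * (if k ≤ m then a (m - k) else 0)
      = ∑ m ∈ Ico k n, c ((j : ℤ) - m).natAbs * a (m - k) := by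
    rw [range_eq_Ico, ← Finset.sum_Ico_consecutive _ (Nat.zero_le k) hkn]
    have h0 : ∑ m ∈ Ico 0 k, c ((j : ℤ) - m).natAbs * (if k ≤ m then a (m - k) else 0) = 0 := by
      apply Finset.sum_eq_zero
      intro m hm
      rw [Finset.mem_Ico] at hm
      rw [if_neg (by omega), mul_zero]
    rw [h0, zero_add]
    apply Finset.sum_congr rfl
    intro m hm
    rw [Finset.mem_Ico] at hm
    rw [if_pos hm.1]
  -- step 2: reindex
  have s2 : ∑ m ∈ Ico k n, c ((j : ℤ) - m).natAbs * a (m - k)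
      = ∑ ℓ ∈ range (n - k), a ℓ * c ((j : ℤ) - k - ℓ).natAbs := by
    rw [Finset.sum_Ico_eq_sum_range]
    apply Finset.sum_congr rfl
    intro ℓ _
    have h1 : k + ℓ - k = ℓ := by omega
    have h2 : ((j : ℤ) - (k + ℓ : ℕ)).natAbs = ((j : ℤ) - k - ℓ).natAbs := by
      push_cast; omega
    rw [h1, h2, mul_comm]
  -- step 3: complete the range
  have s3 : (∑ ℓ ∈ range (n - k), a ℓ * c ((j : ℤ) - k - ℓ).natAbs)
        + ∑ ℓ ∈ Icc (n - k) n, a ℓ * c ((j : ℤ) - k - ℓ).natAbs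
      = ∑ ℓ ∈ range (n + 1), a ℓ * c ((j : ℤ) - k - ℓ).natAbs := by
    simp only [range_eq_Ico, ← Finset.Ico_add_one_right_eq_Icc]
    exact Finset.sum_Ico_consecutive _ (Nat.zero_le _) (by omega)
  -- step 4: shrink to p+1 and apply YW
  have s4 : ∑ ℓ ∈ range (n + 1), a ℓ * c ((j : ℤ) - k - ℓ).natAbs
      = if k = j then σ2 else 0 := by
    have hsub : range (p + 1) ⊆ range (n + 1) := by
      apply Finset.range_subset_range.2; omega
    rw [← Finset.sum_subset hsub (fun ℓ _ hℓ => by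
      rw [Finset.mem_range, not_lt] at hℓ
      rw [hap ℓ (by rw [Finset.mem_range] at *; omega), zero_mul])]
    have := hYW (j - k)
    have harg : ∀ ℓ ∈ range (p+1), a ℓ * c (((j - k : ℕ) : ℤ) - ℓ).natAbs
        = a ℓ * c ((j : ℤ) - k - ℓ).natAbs := by
      intro ℓ _
      congr 2
      omega
    rw [Finset.sum_congr rfl harg] at this
    rw [this]
    by_cases h : k = j
    · rw [if_pos (by omega), if_pos h]
    · rw [if_neg (by omega), if_neg h]
  rw [s1, s2, ← s4, ← s3]
  ring

lemma PE_lemma (p n : ℕ) (hpn : p ≤ n) (a : ℕ → ℝ) (σ2 : ℝ)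
    (hap : ∀ ℓ, p < ℓ → a ℓ = 0) (c : ℕ → ℝ)
    (hYW : ∀ k : ℕ, ∑ ℓ ∈ Finset.range (p + 1), a ℓ * c ((k : ℤ) - (ℓ : ℤ)).natAbs =
      if k = 0 then σ2 else 0)
    (j k : ℕ) (hjn : j < n) :
    ∑ m ∈ range n, c ((j : ℤ) - m).natAbs * a (k + n - m)
      = - ∑ ℓ ∈ range (k + 1), a ℓ * c (((k + n - j : ℕ) : ℤ) - ℓ).natAbs := by
  set s : ℕ := k + n - j with hs
  -- reflect
  have s1 : ∑ m ∈ range n, c ((j : ℤ) - m).natAbs * a (k + n - m)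
      = ∑ m ∈ range n, a (k + 1 + m) * c ((s : ℤ) - ((k + 1 + m : ℕ) : ℤ)).natAbs := by
    rw [← Finset.sum_range_reflect (fun m => c ((j : ℤ) - m).natAbs * a (k + n - m)) n]
    apply Finset.sum_congr rfl
    intro m hm
    rw [Finset.mem_range] at hm
    have h1 : k + n - (n - 1 - m) = k + 1 + m := by omega
    have h2 : ((j : ℤ) - ((n - 1 - m : ℕ) : ℤ)).natAbs
        = ((s : ℤ) - ((k + 1 + m : ℕ) : ℤ)).natAbs := by
      omega
    rw [h1, h2, mul_comm]
  -- reindex to Ico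
  have s2 : ∑ m ∈ range n, a (k + 1 + m) * c ((s : ℤ) - ((k + 1 + m : ℕ) : ℤ)).natAbs
      = ∑ ℓ ∈ Ico (k + 1) (k + 1 + n), a ℓ * c ((s : ℤ) - ℓ).natAbs := by
    rw [Finset.sum_Ico_eq_sum_range]
    have h : k + 1 + n - (k + 1) = n := by omega
    rw [h]
  -- complete
  have s3 : (∑ ℓ ∈ range (k + 1), a ℓ * c ((s : ℤ) - ℓ).natAbs)
        + ∑ ℓ ∈ Ico (k + 1) (k + 1 + n), a ℓ * c ((s : ℤ) - ℓ).natAbs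
      = ∑ ℓ ∈ range (k + 1 + n), a ℓ * c ((s : ℤ) - ℓ).natAbs := by
    simp only [range_eq_Ico]
    exact Finset.sum_Ico_consecutive _ (Nat.zero_le _) (by omega)
  have s4 : ∑ ℓ ∈ range (k + 1 + n), a ℓ * c ((s : ℤ) - ℓ).natAbs = 0 := by
    have hsub : range (p + 1) ⊆ range (k + 1 + n) := by
      apply Finset.range_subset_range.2; omega
    rw [← Finset.sum_subset hsub (fun ℓ _ hℓ => by
      rw [Finset.mem_range, not_lt] at hℓ
      rw [hap ℓ (by omega), zero_mul])]
    rw [hYW s, if_neg (by omega)]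
  rw [s1, s2]
  have := s3
  rw [s4] at this
  linarith

lemma XY_cancel (p n : ℕ) (hpn : p ≤ n) (a : ℕ → ℝ)
    (hap : ∀ ℓ, p < ℓ → a ℓ = 0) (c : ℕ → ℝ)
    (i j : ℕ) (hij : i ≤ j) (hjn : j < n) :
    ∑ k ∈ range (i + 1), (∑ ℓ ∈ Icc (n - k) n, a ℓ * c ((j : ℤ) - k - ℓ).natAbs) * a (i - k)
      = ∑ k ∈ range (i + 1),
          (∑ ℓ ∈ range (k + 1), a ℓ * c (((k + n - j : ℕ) : ℤ) - ℓ).natAbs) * a (k + n - i) := by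
  simp only [Finset.sum_mul]
  rw [Finset.sum_sigma' (range (i+1)) (fun k => Icc (n - k) n)
    (fun k ℓ => a ℓ * c ((j : ℤ) - k - ℓ).natAbs * a (i - k))]
  rw [Finset.sum_sigma' (range (i+1)) (fun k => range (k + 1))
    (fun k ℓ => a ℓ * c (((k + n - j : ℕ) : ℤ) - ℓ).natAbs * a (k + n - i))]
  apply Finset.sum_nbij' (fun x => (⟨x.2 + i - n, i - x.1⟩ : Σ _ : ℕ, ℕ))
    (fun x => (⟨i - x.2, x.1 + n - i⟩ : Σ _ : ℕ, ℕ))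
  · rintro ⟨k, ℓ⟩ hx
    simp only [mem_sigma, mem_range, mem_Icc] at hx ⊢
    omega
  · rintro ⟨k, ℓ⟩ hx
    simp only [mem_sigma, mem_range, mem_Icc] at hx ⊢
    omega
  · rintro ⟨k, ℓ⟩ hx
    simp only [mem_sigma, mem_range, mem_Icc] at hx
    have e1 : i - (i - k) = k := by omega
    have e2 : ℓ + i - n + n - i = ℓ := by omega
    simp only [e1, e2]
  · rintro ⟨k, ℓ⟩ hx
    simp only [mem_sigma, mem_range, mem_Icc] at hx
    have e1 : k + n - i + i - n = k := by omega
    have e2 : i - (i - ℓ) = ℓ := by omega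
    simp only [e1, e2]
  · rintro ⟨k, ℓ⟩ hx
    simp only [mem_sigma, mem_range, mem_Icc] at hx
    have e1 : ℓ + i - n + n - i = ℓ := by omega
    have e2 : ((j : ℤ) - k - ℓ).natAbs
        = (((ℓ + i - n + n - j : ℕ) : ℤ) - ((i - k : ℕ) : ℤ)).natAbs := by omega
    simp only [e1]
    rw [e2]
    ring

lemma key_sum (p n : ℕ) (hpn : p ≤ n) (a : ℕ → ℝ) (σ2 : ℝ) (ha0 : a 0 = 1)
    (hap : ∀ ℓ, p < ℓ → a ℓ = 0) (c : ℕ → ℝ)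
    (hYW : ∀ k : ℕ, ∑ ℓ ∈ Finset.range (p + 1), a ℓ * c ((k : ℤ) - (ℓ : ℤ)).natAbs =
      if k = 0 then σ2 else 0)
    (i j : ℕ) (hij : i ≤ j) (hjn : j < n) :
    ∑ k ∈ range n,
      ((∑ m ∈ range n, c ((j : ℤ) - m).natAbs * (if k ≤ m then a (m - k) else 0))
          * (if k ≤ i then a (i - k) else 0)
        - (∑ m ∈ range n, c ((j : ℤ) - m).natAbs * a (k + n - m)) * a (k + n - i))
      = if i = j then σ2 else 0 := by
  rw [Finset.sum_sub_distrib]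
  have hsub : range (i + 1) ⊆ range n := Finset.range_subset_range.2 (by omega)
  -- first part
  have T1 : ∑ k ∈ range n,
      (∑ m ∈ range n, c ((j : ℤ) - m).natAbs * (if k ≤ m then a (m - k) else 0))
        * (if k ≤ i then a (i - k) else 0)
      = (if i = j then σ2 else 0)
        - ∑ k ∈ range (i + 1), (∑ ℓ ∈ Icc (n - k) n, a ℓ * c ((j : ℤ) - k - ℓ).natAbs)
            * a (i - k) := by
    rw [← Finset.sum_subset hsub (fun k _ hk => by
      rw [Finset.mem_range, not_lt] at hk
      rw [if_neg (by omega), mul_zero])]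
    have step : ∀ k ∈ range (i + 1),
        (∑ m ∈ range n, c ((j : ℤ) - m).natAbs * (if k ≤ m then a (m - k) else 0))
          * (if k ≤ i then a (i - k) else 0)
        = ((if k = j then σ2 else 0)
            - ∑ ℓ ∈ Icc (n - k) n, a ℓ * c ((j : ℤ) - k - ℓ).natAbs) * a (i - k) := by
      intro k hk
      rw [Finset.mem_range] at hk
      rw [PF_lemma p n hpn a σ2 hap c hYW j k (by omega) hjn]
      congr 1
      rw [if_pos (show k ≤ i by omega)]
    rw [Finset.sum_congr rfl step]
    simp only [sub_mul, Finset.sum_sub_distrib, ite_mul, zero_mul]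
    congr 1
    rw [Finset.sum_ite_eq' (range (i + 1)) j (fun k => σ2 * a (i - k))]
    by_cases h : i = j
    · rw [if_pos (by rw [Finset.mem_range]; omega), if_pos h, h]
      simp [ha0]
    · rw [if_neg (by rw [Finset.mem_range]; omega), if_neg h]
  -- second part
  have T2 : ∑ k ∈ range n,
      (∑ m ∈ range n, c ((j : ℤ) - m).natAbs * a (k + n - m)) * a (k + n - i)
      = - ∑ k ∈ range (i + 1),
          (∑ ℓ ∈ range (k + 1), a ℓ * c (((k + n - j : ℕ) : ℤ) - ℓ).natAbs) * a (k + n - i) := by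
    have step : ∀ k ∈ range n,
        (∑ m ∈ range n, c ((j : ℤ) - m).natAbs * a (k + n - m)) * a (k + n - i)
        = - ((∑ ℓ ∈ range (k + 1), a ℓ * c (((k + n - j : ℕ) : ℤ) - ℓ).natAbs)
            * a (k + n - i)) := by
      intro k _
      rw [PE_lemma p n hpn a σ2 hap c hYW j k hjn]
      ring
    rw [Finset.sum_congr rfl step, Finset.sum_neg_distrib, neg_inj]
    exact (Finset.sum_subset hsub (fun k hk' hk => by
      rw [Finset.mem_range, not_lt] at hk
      rw [Finset.mem_range] at hk'
      rw [hap (k + n - i) (by omega), mul_zero])).symm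
  rw [T1, T2, XY_cancel p n hpn a hap c i j hij hjn]
  ring

end AuxLemmas

/-- for a stationary AR(p) process with coefficients a_0 = 1, a_1, …, a_p
(a_ℓ = 0 for ℓ > p) and innovation variance σ² — whose covariance sequence c is
characterized by the Yule–Walker relations Σ_ℓ a_ℓ c_{k−ℓ} = σ²·δ_{k,0} — the inverse of
the covariance matrix C_n of n ≥ p consecutive samples is given explicitly (0-based
indices i ≤ j, corresponding to the paper's 1-based formula) by
σ²·[C_n⁻¹]_{i,j} = Σ_{ℓ=0}^{i} a_ℓ a_{ℓ+j−i} − Σ_{ℓ=n−j}^{n−j+i} a_ℓ a_{ℓ+j−i},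
and C_n⁻¹ is symmetric. -/

theorem ar_inverse_covariance (p n : ℕ) (hpn : p ≤ n) (hn : 0 < n)
    (a : ℕ → ℝ) (σ2 : ℝ) (hσ : 0 < σ2) (ha0 : a 0 = 1) (hap : ∀ ℓ, p < ℓ → a ℓ = 0)
    (c : ℕ → ℝ)
    (hYW : ∀ k : ℕ, ∑ ℓ ∈ Finset.range (p + 1), a ℓ * c ((k : ℤ) - (ℓ : ℤ)).natAbs =
      if k = 0 then σ2 else 0)
    (hPD : (toeplitz c n).PosDef) :
    (∀ i j : Fin n, (i : ℕ) ≤ (j : ℕ) →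
      σ2 * (toeplitz c n)⁻¹ i j =
        (∑ ℓ ∈ Finset.range ((i : ℕ) + 1), a ℓ * a (ℓ + (j : ℕ) - (i : ℕ))) -
          ∑ ℓ ∈ Finset.Icc (n - (j : ℕ)) (n - (j : ℕ) + (i : ℕ)),
            a ℓ * a (ℓ + (j : ℕ) - (i : ℕ))) ∧
    ∀ i j : Fin n, (toeplitz c n)⁻¹ j i = (toeplitz c n)⁻¹ i j := by
  classical
  set C : Matrix (Fin n) (Fin n) ℝ := toeplitz c n with hCdef
  set F : Matrix (Fin n) (Fin n) ℝ :=
    Matrix.of fun k i => if (k : ℕ) ≤ (i : ℕ) then a ((i : ℕ) - (k : ℕ)) else 0 with hFdef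
  set E : Matrix (Fin n) (Fin n) ℝ :=
    Matrix.of fun k i => a ((k : ℕ) + n - (i : ℕ)) with hEdef
  set M : Matrix (Fin n) (Fin n) ℝ := Fᵀ * F - Eᵀ * E with hMdef
  -- the key product identity
  have hCM : ∀ i j : Fin n, (i : ℕ) ≤ (j : ℕ) →
      (C * M) j i = if (i : ℕ) = (j : ℕ) then σ2 else 0 := by
    intro i j hij
    have inner1 : ∀ k : Fin n, (∑ m : Fin n, C j m * F k m)
        = ∑ m ∈ range n, c (((j : ℕ) : ℤ) - m).natAbs
            * (if (k : ℕ) ≤ m then a (m - (k : ℕ)) else 0) := by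
      intro k
      rw [← Fin.sum_univ_eq_sum_range (fun m => c (((j : ℕ) : ℤ) - m).natAbs
        * (if (k : ℕ) ≤ m then a (m - (k : ℕ)) else 0)) n]
      rfl
    have inner2 : ∀ k : Fin n, (∑ m : Fin n, C j m * E k m)
        = ∑ m ∈ range n, c (((j : ℕ) : ℤ) - m).natAbs * a ((k : ℕ) + n - m) := by
      intro k
      rw [← Fin.sum_univ_eq_sum_range (fun m => c (((j : ℕ) : ℤ) - m).natAbs
        * a ((k : ℕ) + n - m)) n]
      rfl
    have expand : (C * M) j i
        = ∑ k : Fin n, ((∑ m : Fin n, C j m * F k m) * F k i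
            - (∑ m : Fin n, C j m * E k m) * E k i) := by
      rw [hMdef, Matrix.mul_sub, Matrix.sub_apply, ← Matrix.mul_assoc, ← Matrix.mul_assoc,
        Matrix.mul_apply, Matrix.mul_apply, ← Finset.sum_sub_distrib]
      apply Finset.sum_congr rfl
      intro k _
      rw [Matrix.mul_apply, Matrix.mul_apply]
      rfl
    have conv : (C * M) j i = ∑ k ∈ range n,
        ((∑ m ∈ range n, c (((j : ℕ) : ℤ) - m).natAbs * (if k ≤ m then a (m - k) else 0))
            * (if k ≤ (i : ℕ) then a ((i : ℕ) - k) else 0)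
          - (∑ m ∈ range n, c (((j : ℕ) : ℤ) - m).natAbs * a (k + n - m))
              * a (k + n - (i : ℕ))) := by
      rw [expand, ← Fin.sum_univ_eq_sum_range (fun k =>
        (∑ m ∈ range n, c (((j : ℕ) : ℤ) - m).natAbs * (if k ≤ m then a (m - k) else 0))
            * (if k ≤ (i : ℕ) then a ((i : ℕ) - k) else 0)
          - (∑ m ∈ range n, c (((j : ℕ) : ℤ) - m).natAbs * a (k + n - m))
              * a (k + n - (i : ℕ))) n]
      apply Finset.sum_congr rfl
      intro k _
      rw [inner1 k, inner2 k]
      rfl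
    rw [conv]
    exact key_sum p n hpn a σ2 ha0 hap c hYW (i : ℕ) (j : ℕ) hij j.isLt
  have Csymm : Cᵀ = C := by
    ext r s
    show c (((s : ℕ) : ℤ) - ((r : ℕ) : ℤ)).natAbs = c (((r : ℕ) : ℤ) - ((s : ℕ) : ℤ)).natAbs
    congr 1
    omega
  have Msymm : Mᵀ = M := by
    rw [hMdef, Matrix.transpose_sub, Matrix.transpose_mul, Matrix.transpose_mul,
      Matrix.transpose_transpose, Matrix.transpose_transpose]
  set D : Matrix (Fin n) (Fin n) ℝ := C * M - σ2 • (1 : Matrix (Fin n) (Fin n) ℝ) with hDdef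
  have htri : ∀ r c' : Fin n, (c' : ℕ) ≤ (r : ℕ) → D r c' = 0 := by
    intro r c' h
    have hcm := hCM c' r h
    rw [hDdef, Matrix.sub_apply, Matrix.smul_apply, Matrix.one_apply, hcm, smul_eq_mul]
    by_cases he : r = c'
    · subst he; rw [if_pos rfl, if_pos rfl]; ring
    · rw [if_neg (fun hh => he (Fin.ext hh).symm), if_neg he]; ring
  have hDT : Dᵀ = M * C - σ2 • (1 : Matrix (Fin n) (Fin n) ℝ) := by
    rw [hDdef, Matrix.transpose_sub, Matrix.transpose_mul, Msymm, Csymm,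
      Matrix.transpose_smul, Matrix.transpose_one]
  have hcomm : D * C = C * Dᵀ := by
    calc D * C = C * M * C - σ2 • C := by
          rw [hDdef, Matrix.sub_mul, smul_mul_assoc, Matrix.one_mul]
    _ = C * Dᵀ := by
          conv_rhs => rw [hDT, Matrix.mul_sub, mul_smul_comm, Matrix.mul_one]
          rw [Matrix.mul_assoc]
  have hD0 : D = 0 := strictUpper_comm_posDef_eq_zero C D hPD Csymm htri hcomm
  have hCMeq : C * M = σ2 • (1 : Matrix (Fin n) (Fin n) ℝ) := by
    rwa [sub_eq_zero] at hD0
  have hinv1 : C * (σ2⁻¹ • M) = 1 := by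
    rw [mul_smul_comm, hCMeq, smul_smul, inv_mul_cancel₀ hσ.ne', one_smul]
  have hCinv : C⁻¹ = σ2⁻¹ • M := Matrix.inv_eq_right_inv hinv1
  -- entry computation for M
  have Mentry : ∀ i j : Fin n, (i : ℕ) ≤ (j : ℕ) → M i j =
      (∑ ℓ ∈ Finset.range ((i : ℕ) + 1), a ℓ * a (ℓ + (j : ℕ) - (i : ℕ))) -
        ∑ ℓ ∈ Finset.Icc (n - (j : ℕ)) (n - (j : ℕ) + (i : ℕ)),
          a ℓ * a (ℓ + (j : ℕ) - (i : ℕ)) := by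
    intro i j hij
    have hjn : (j : ℕ) < n := j.isLt
    have hsub : range ((i : ℕ) + 1) ⊆ range n := Finset.range_subset_range.2 (by omega)
    have part1 : (Fᵀ * F) i j
        = ∑ ℓ ∈ Finset.range ((i : ℕ) + 1), a ℓ * a (ℓ + (j : ℕ) - (i : ℕ)) := by
      rw [Matrix.mul_apply]
      rw [show (∑ k : Fin n, Fᵀ i k * F k j)
          = ∑ k ∈ range n, (if k ≤ (i : ℕ) then a ((i : ℕ) - k) else 0)
              * (if k ≤ (j : ℕ) then a ((j : ℕ) - k) else 0) from by
        rw [← Fin.sum_univ_eq_sum_range (fun k =>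
          (if k ≤ (i : ℕ) then a ((i : ℕ) - k) else 0)
            * (if k ≤ (j : ℕ) then a ((j : ℕ) - k) else 0)) n]
        rfl]
      rw [← Finset.sum_subset hsub (fun k _ hk => by
        rw [Finset.mem_range, not_lt] at hk
        rw [if_neg (by omega), zero_mul])]
      rw [← Finset.sum_range_reflect (fun ℓ => a ℓ * a (ℓ + (j : ℕ) - (i : ℕ))) ((i : ℕ) + 1)]
      apply Finset.sum_congr rfl
      intro k hk
      rw [Finset.mem_range] at hk
      rw [if_pos (by omega), if_pos (by omega)]
      have e1 : (i : ℕ) + 1 - 1 - k = (i : ℕ) - k := by omega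
      have e2 : (i : ℕ) - k + (j : ℕ) - (i : ℕ) = (j : ℕ) - k := by omega
      rw [e1, e2]
    have part2 : (Eᵀ * E) i j
        = ∑ ℓ ∈ Finset.Icc (n - (j : ℕ)) (n - (j : ℕ) + (i : ℕ)),
            a ℓ * a (ℓ + (j : ℕ) - (i : ℕ)) := by
      rw [Matrix.mul_apply]
      rw [show (∑ k : Fin n, Eᵀ i k * E k j)
          = ∑ k ∈ range n, a (k + n - (i : ℕ)) * a (k + n - (j : ℕ)) from by
        rw [← Fin.sum_univ_eq_sum_range (fun k =>
          a (k + n - (i : ℕ)) * a (k + n - (j : ℕ))) n]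
        rfl]
      rw [← Finset.sum_subset hsub (fun k hk' hk => by
        rw [Finset.mem_range, not_lt] at hk
        rw [Finset.mem_range] at hk'
        rw [hap (k + n - (i : ℕ)) (by omega), zero_mul])]
      rw [← Finset.Ico_add_one_right_eq_Icc, Finset.sum_Ico_eq_sum_range]
      have e0 : n - (j : ℕ) + (i : ℕ) + 1 - (n - (j : ℕ)) = (i : ℕ) + 1 := by omega
      rw [e0]
      apply Finset.sum_congr rfl
      intro k hk
      rw [Finset.mem_range] at hk
      have e1 : n - (j : ℕ) + k = k + n - (j : ℕ) := by omega
      have e2 : k + n - (j : ℕ) + (j : ℕ) - (i : ℕ) = k + n - (i : ℕ) := by omega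
      rw [e1, e2, mul_comm]
    rw [hMdef, Matrix.sub_apply, part1, part2]
  constructor
  · intro i j hij
    rw [hCinv, Matrix.smul_apply, smul_eq_mul, ← mul_assoc, mul_inv_cancel₀ hσ.ne', one_mul]
    exact Mentry i j hij
  · intro i j
    rw [hCinv, Matrix.smul_apply, Matrix.smul_apply]
    congr 1
    calc M j i = Mᵀ i j := rfl
    _ = M i j := by rw [Msymm]
end

section
/- Let a_0 = 1, a_1, …, a_p be AR(p) coefficients with innovation variance σ², and C_n (n ≥ p) the covariance of n consecutive samples. Then the normalized trace-inverse satisfies M_n = (1/n)tr(C_n⁻¹) = (1/σ²)·Σ_{ℓ=0}^{n} (1 − 2ℓ/n)·a_ℓ², with a_ℓ := 0 for ℓ > p. -/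
open Matrix Finset

/-- extended AR coefficients on ℤ -/
noncomputable def arH (a : ℕ → ℝ) : ℤ → ℝ := fun t => if 0 ≤ t then a t.toNat else 0

/-- extended autocovariance on ℤ -/
noncomputable def arG (c : ℕ → ℝ) : ℤ → ℝ := fun t => c t.natAbs

lemma arH_neg (a : ℕ → ℝ) {t : ℤ} (ht : t < 0) : arH a t = 0 := by
  simp [arH, not_le.mpr ht]

lemma arH_nat (a : ℕ → ℝ) (m : ℕ) : arH a (m : ℤ) = a m := by
  simp [arH]

lemma arH_big {p : ℕ} {a : ℕ → ℝ} (hap : ∀ ℓ, p < ℓ → a ℓ = 0) {t : ℤ}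
    (ht : (p : ℤ) < t) : arH a t = 0 := by
  unfold arH
  split
  · exact hap _ (by omega)
  · rfl

lemma arG_even (c : ℕ → ℝ) (t : ℤ) : arG c (-t) = arG c t := by
  simp [arG]

/-- a range-sum that vanishes past both bounds can change bound -/
lemma sum_range_ext (f : ℕ → ℝ) (A B : ℕ) (hA : ∀ k, A ≤ k → f k = 0)
    (hB : ∀ k, B ≤ k → f k = 0) :
    ∑ k ∈ range A, f k = ∑ k ∈ range B, f k := by
  have h1 : ∑ k ∈ range A, f k = ∑ k ∈ range (max A B), f k := by
    apply Finset.sum_subset (Finset.range_subset_range.mpr (le_max_left _ _))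
    intro x _ hx
    exact hA x (by simpa using hx)
  have h2 : ∑ k ∈ range B, f k = ∑ k ∈ range (max A B), f k := by
    apply Finset.sum_subset (Finset.range_subset_range.mpr (le_max_right _ _))
    intro x _ hx
    exact hB x (by simpa using hx)
  rw [h1, h2]

/-- extended Yule-Walker -/
lemma arD (p n : ℕ) (hpn : p ≤ n) (a : ℕ → ℝ) (σ2 : ℝ) (hap : ∀ ℓ, p < ℓ → a ℓ = 0)
    (c : ℕ → ℝ)
    (hYW : ∀ k : ℕ, ∑ ℓ ∈ Finset.range (p + 1), a ℓ * c ((k : ℤ) - (ℓ : ℤ)).natAbs =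
      if k = 0 then σ2 else 0)
    (t : ℤ) (ht : 0 ≤ t) :
    ∑ m ∈ range (n + 1), arH a m * arG c (t - m) = if t = 0 then σ2 else 0 := by
  have h1 : ∑ m ∈ range (n + 1), arH a m * arG c (t - m)
      = ∑ m ∈ range (p + 1), arH a m * arG c (t - m) := by
    apply sum_range_ext
    · intro k hk
      by_cases h : p < k
      · rw [arH_nat, hap k h, zero_mul]
      · rw [arH_big hap (by omega), zero_mul]
    · intro k hk
      rw [arH_big hap (by omega), zero_mul]
  rw [h1]
  have h2 := hYW t.toNat
  have h3 : ∑ m ∈ range (p + 1), arH a m * arG c (t - m)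
      = ∑ ℓ ∈ Finset.range (p + 1), a ℓ * c (((t.toNat : ℕ) : ℤ) - (ℓ : ℤ)).natAbs := by
    apply Finset.sum_congr rfl
    intro m _
    rw [arH_nat]
    show a m * c (t - m).natAbs = _
    congr 2
    omega
  rw [h3, h2]
  congr 1
  simp only [eq_iff_iff]
  omega

lemma arRefl (p n : ℕ) (hpn : p ≤ n) (a : ℕ → ℝ)
    (hap : ∀ ℓ, p < ℓ → a ℓ = 0) (i r : ℕ) (hi : i < n) (hr : r < n) :
    ∑ ℓ ∈ Finset.Ico r n, arH a ((i:ℤ) - ℓ) * arH a ((n:ℤ) - ℓ + r)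
      = ∑ ℓ ∈ Finset.Ico r n, arH a ((n:ℤ) - i + ℓ) * arH a ((ℓ:ℤ) - r) := by
  set N := i + r + 1 with hN
  set F : ℕ → ℝ := fun ℓ => arH a ((i:ℤ) - ℓ) * arH a ((n:ℤ) - ℓ + r) with hF
  set G : ℕ → ℝ := fun ℓ => arH a ((n:ℤ) - i + ℓ) * arH a ((ℓ:ℤ) - r) with hG
  have hF0 : ∀ ℓ : ℕ, ℓ < r → F ℓ = 0 := by
    intro ℓ hℓ
    have : arH a ((n:ℤ) - ℓ + r) = 0 := arH_big hap (by push_cast; omega)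
    simp only [hF, this, mul_zero]
  have hG0 : ∀ ℓ : ℕ, ℓ < r → G ℓ = 0 := by
    intro ℓ hℓ
    have : arH a ((ℓ:ℤ) - r) = 0 := arH_neg a (by push_cast; omega)
    simp only [hG, this, mul_zero]
  have hFn : ∀ k : ℕ, n ≤ k → F k = 0 := by
    intro k hk
    have : arH a ((i:ℤ) - k) = 0 := arH_neg a (by push_cast; omega)
    simp only [hF, this, zero_mul]
  have hFN : ∀ k : ℕ, N ≤ k → F k = 0 := by
    intro k hk
    have : arH a ((i:ℤ) - k) = 0 := arH_neg a (by push_cast; omega)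
    simp only [hF, this, zero_mul]
  have hGn : ∀ k : ℕ, n ≤ k → G k = 0 := by
    intro k hk
    have : arH a ((n:ℤ) - i + k) = 0 := arH_big hap (by push_cast; omega)
    simp only [hG, this, zero_mul]
  have hGN : ∀ k : ℕ, N ≤ k → G k = 0 := by
    intro k hk
    have : arH a ((n:ℤ) - i + k) = 0 := arH_big hap (by push_cast; omega)
    simp only [hG, this, zero_mul]
  have eF1 : ∑ ℓ ∈ range n, F ℓ = ∑ ℓ ∈ Finset.Ico r n, F ℓ := by
    rw [← Nat.Ico_zero_eq_range, ← Finset.sum_Ico_consecutive _ (Nat.zero_le r) hr.le,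
      Finset.sum_eq_zero (fun ℓ hℓ => hF0 ℓ (Finset.mem_Ico.mp hℓ).2), zero_add]
  have eG1 : ∑ ℓ ∈ range n, G ℓ = ∑ ℓ ∈ Finset.Ico r n, G ℓ := by
    rw [← Nat.Ico_zero_eq_range, ← Finset.sum_Ico_consecutive _ (Nat.zero_le r) hr.le,
      Finset.sum_eq_zero (fun ℓ hℓ => hG0 ℓ (Finset.mem_Ico.mp hℓ).2), zero_add]
  have key : ∑ ℓ ∈ range N, F ℓ = ∑ ℓ ∈ range N, G ℓ := by
    have : ∀ ℓ ∈ range N, F ℓ = G (N - 1 - ℓ) := by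
      intro ℓ hℓ
      have hℓN : ℓ ≤ i + r := by simpa [hN, Nat.lt_succ_iff] using hℓ
      have hcast : ((N - 1 - ℓ : ℕ) : ℤ) = (i : ℤ) + r - ℓ := by
        push_cast [hN]; omega
      simp only [hF, hG, hcast]
      rw [mul_comm]
      congr 2 <;> ring
    rw [Finset.sum_congr rfl this, Finset.sum_range_reflect]
  rw [← eF1, ← eG1, sum_range_ext F n N hFn hFN, sum_range_ext G n N hGn hGN, key]

section UV
variable (p n : ℕ) (a : ℕ → ℝ) (σ2 : ℝ) (c : ℕ → ℝ)

/-- the U-decomposition -/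
lemma arU (hpn : p ≤ n) (j ℓ : ℕ) (hj : j < n) (hℓ : ℓ < n) :
    ∑ k ∈ range n, arH a ((k:ℤ) - ℓ) * arG c ((k:ℤ) - j)
      = (∑ m ∈ range (n+1), arH a (m:ℤ) * arG c ((j:ℤ) - ℓ - m))
        - ∑ m ∈ Finset.Ico (n - ℓ) (n+1), arH a (m:ℤ) * arG c ((j:ℤ) - ℓ - m) := by
  have h1 : ∑ k ∈ range n, arH a ((k:ℤ) - ℓ) * arG c ((k:ℤ) - j)
      = ∑ k ∈ Finset.Ico ℓ n, arH a ((k:ℤ) - ℓ) * arG c ((k:ℤ) - j) := by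
    rw [← Nat.Ico_zero_eq_range, ← Finset.sum_Ico_consecutive _ (Nat.zero_le ℓ) hℓ.le]
    have : ∑ k ∈ Finset.Ico 0 ℓ, arH a ((k:ℤ) - ℓ) * arG c ((k:ℤ) - j) = 0 := by
      apply Finset.sum_eq_zero
      intro k hk
      have hk' := (Finset.mem_Ico.mp hk).2
      rw [arH_neg a (by omega), zero_mul]
    rw [this, zero_add]
  have h2 : ∑ k ∈ Finset.Ico ℓ n, arH a ((k:ℤ) - ℓ) * arG c ((k:ℤ) - j)
      = ∑ m ∈ range (n - ℓ), arH a (m:ℤ) * arG c ((j:ℤ) - ℓ - m) := by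
    rw [Finset.sum_Ico_eq_sum_range]
    apply Finset.sum_congr rfl
    intro m _
    have e1 : ((ℓ + m : ℕ) : ℤ) - ℓ = (m:ℤ) := by push_cast; ring
    have e2 : ((ℓ + m : ℕ) : ℤ) - j = -((j:ℤ) - ℓ - m) := by push_cast; ring
    rw [e1, e2, arG_even]
  rw [h1, h2, eq_sub_iff_add_eq]
  simp only [← Nat.Ico_zero_eq_range]
  exact Finset.sum_Ico_consecutive _ (Nat.zero_le (n - ℓ)) (by omega : n - ℓ ≤ n + 1)

/-- the V-decomposition -/
lemma arV (hpn : p ≤ n) (hap : ∀ ℓ, p < ℓ → a ℓ = 0)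
    (hYW : ∀ k : ℕ, ∑ ℓ ∈ Finset.range (p + 1), a ℓ * c ((k : ℤ) - (ℓ : ℤ)).natAbs =
      if k = 0 then σ2 else 0)
    (j ℓ : ℕ) (hj : j < n) (hℓ : ℓ < n) :
    ∑ k ∈ range n, arH a ((n:ℤ) - k + ℓ) * arG c ((k:ℤ) - j)
      = -∑ m ∈ range (ℓ+1), arH a (m:ℤ) * arG c ((n:ℤ) + ℓ - j - m) := by
  have h1 : ∑ k ∈ range n, arH a ((n:ℤ) - k + ℓ) * arG c ((k:ℤ) - j)
      = ∑ m ∈ Finset.Ico (ℓ+1) (n+ℓ+1), arH a (m:ℤ) * arG c ((n:ℤ) + ℓ - j - m) := by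
    apply Finset.sum_nbij' (fun k => n + ℓ - k) (fun m => n + ℓ - m)
    · intro k hk
      simp only [Finset.mem_range] at hk
      simp only [Finset.mem_Ico]
      omega
    · intro m hm
      simp only [Finset.mem_Ico] at hm
      simp only [Finset.mem_range]
      omega
    · intro k hk
      simp only [Finset.mem_range] at hk
      omega
    · intro m hm
      simp only [Finset.mem_Ico] at hm
      omega
    · intro k hk
      simp only [Finset.mem_range] at hk
      have e1 : ((n + ℓ - k : ℕ) : ℤ) = (n:ℤ) + ℓ - k := by omega
      rw [e1]
      have e2 : (n:ℤ) - k + ℓ = (n:ℤ) + ℓ - k := by ring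
      have e3 : (n:ℤ) + ℓ - j - ((n:ℤ) + ℓ - k) = (k:ℤ) - j := by ring
      rw [e2, e3]
  have h2 : ∑ m ∈ Finset.Ico (n+1) (n+ℓ+1), arH a (m:ℤ) * arG c ((n:ℤ) + ℓ - j - m) = 0 := by
    apply Finset.sum_eq_zero
    intro m hm
    have hm' := (Finset.mem_Ico.mp hm).1
    rw [arH_big hap (by omega), zero_mul]
  have h3 : ∑ m ∈ range (n+1), arH a (m:ℤ) * arG c ((n:ℤ) + ℓ - j - m) = 0 := by
    have := arD p n hpn a σ2 hap c hYW ((n:ℤ) + ℓ - j) (by omega)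
    rw [if_neg (by omega)] at this
    exact this
  rw [h1, ← Finset.sum_Ico_consecutive _ (by omega : ℓ+1 ≤ n+1) (by omega : n+1 ≤ n+ℓ+1), h2,
    add_zero]
  have h4 : ∑ m ∈ range (ℓ+1), arH a (m:ℤ) * arG c ((n:ℤ) + ℓ - j - m)
      + ∑ m ∈ Finset.Ico (ℓ+1) (n+1), arH a (m:ℤ) * arG c ((n:ℤ) + ℓ - j - m)
      = ∑ m ∈ range (n+1), arH a (m:ℤ) * arG c ((n:ℤ) + ℓ - j - m) := by
    simp only [← Nat.Ico_zero_eq_range]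
    exact Finset.sum_Ico_consecutive _ (Nat.zero_le (ℓ+1)) (by omega : ℓ+1 ≤ n+1)
  linarith [h3, h4]
end UV

lemma arEntry (p n : ℕ) (hpn : p ≤ n) (a : ℕ → ℝ) (σ2 : ℝ) (ha0 : a 0 = 1)
    (hap : ∀ ℓ, p < ℓ → a ℓ = 0) (c : ℕ → ℝ)
    (hYW : ∀ k : ℕ, ∑ ℓ ∈ Finset.range (p + 1), a ℓ * c ((k : ℤ) - (ℓ : ℤ)).natAbs =
      if k = 0 then σ2 else 0)
    (i j : ℕ) (hi : i < n) (hj : j < n) (hij : i ≤ j) :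
    ∑ k ∈ range n, (∑ ℓ ∈ range n, (arH a ((i:ℤ) - ℓ) * arH a ((k:ℤ) - ℓ)
        - arH a ((n:ℤ) - i + ℓ) * arH a ((n:ℤ) - k + ℓ))) * arG c ((k:ℤ) - j)
      = if i = j then σ2 else 0 := by
  have step1 : ∑ k ∈ range n, (∑ ℓ ∈ range n, (arH a ((i:ℤ) - ℓ) * arH a ((k:ℤ) - ℓ)
        - arH a ((n:ℤ) - i + ℓ) * arH a ((n:ℤ) - k + ℓ))) * arG c ((k:ℤ) - j)
      = ∑ ℓ ∈ range n, (arH a ((i:ℤ) - ℓ)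
          * (∑ k ∈ range n, arH a ((k:ℤ) - ℓ) * arG c ((k:ℤ) - j))
        - arH a ((n:ℤ) - i + ℓ)
          * (∑ k ∈ range n, arH a ((n:ℤ) - k + ℓ) * arG c ((k:ℤ) - j))) := by
    simp only [Finset.sum_mul, sub_mul]
    rw [Finset.sum_comm]
    apply Finset.sum_congr rfl
    intro ℓ _
    rw [Finset.mul_sum, Finset.mul_sum, ← Finset.sum_sub_distrib]
    apply Finset.sum_congr rfl
    intro k _
    ring
  rw [step1]
  have step2 : ∀ ℓ ∈ range n, arH a ((i:ℤ) - ℓ)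
          * (∑ k ∈ range n, arH a ((k:ℤ) - ℓ) * arG c ((k:ℤ) - j))
        - arH a ((n:ℤ) - i + ℓ)
          * (∑ k ∈ range n, arH a ((n:ℤ) - k + ℓ) * arG c ((k:ℤ) - j))
      = arH a ((i:ℤ) - ℓ) * (∑ m ∈ range (n+1), arH a (m:ℤ) * arG c ((j:ℤ) - ℓ - m))
        - (arH a ((i:ℤ) - ℓ)
            * ∑ m ∈ Finset.Ico (n - ℓ) (n+1), arH a (m:ℤ) * arG c ((j:ℤ) - ℓ - m)
          - arH a ((n:ℤ) - i + ℓ)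
            * ∑ m ∈ range (ℓ+1), arH a (m:ℤ) * arG c ((n:ℤ) + ℓ - j - m)) := by
    intro ℓ hℓ
    have hℓn := Finset.mem_range.mp hℓ
    rw [arU p n a c hpn j ℓ hj hℓn, arV p n a σ2 c hpn hap hYW j ℓ hj hℓn]
    ring
  rw [Finset.sum_congr rfl step2, Finset.sum_sub_distrib]
  -- T1 evaluates to the delta
  have T1 : ∑ ℓ ∈ range n, arH a ((i:ℤ) - ℓ)
      * (∑ m ∈ range (n+1), arH a (m:ℤ) * arG c ((j:ℤ) - ℓ - m))
      = if i = j then σ2 else 0 := by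
    have hpt : ∀ ℓ ∈ range n, arH a ((i:ℤ) - ℓ)
        * (∑ m ∈ range (n+1), arH a (m:ℤ) * arG c ((j:ℤ) - ℓ - m))
        = if ℓ = i ∧ i = j then σ2 else 0 := by
      intro ℓ hℓ
      by_cases hli : i < ℓ
      · rw [arH_neg a (by omega), zero_mul, if_neg (by omega)]
      · push_neg at hli
        have hD := arD p n hpn a σ2 hap c hYW ((j:ℤ) - ℓ) (by omega)
        have harg : ∀ m ∈ range (n+1), arH a (m:ℤ) * arG c ((j:ℤ) - ℓ - m)
            = arH a (m:ℤ) * arG c (((j:ℤ) - ℓ) - m) := fun _ _ => rfl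
        rw [Finset.sum_congr rfl harg, hD]
        by_cases hlj : ℓ = j
        · have : i = j := by omega
          have : ℓ = i := by omega
          rw [if_pos (by omega), if_pos (by constructor <;> omega)]
          have : (i:ℤ) - ℓ = 0 := by omega
          rw [this]
          show (if (0:ℤ) ≤ 0 then a (0:ℤ).toNat else 0) * σ2 = σ2
          simp [ha0]
        · rw [if_neg (by omega), mul_zero, if_neg (by rintro ⟨rfl, rfl⟩; exact hlj rfl)]
    rw [Finset.sum_congr rfl hpt]
    by_cases hij' : i = j
    · subst hij'
      rw [if_pos rfl]
      have hsimp : ∀ ℓ ∈ range n, (if ℓ = i ∧ i = i then σ2 else 0)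
          = if ℓ = i then σ2 else 0 := by
        intro ℓ _; simp
      rw [Finset.sum_congr rfl hsimp, Finset.sum_ite_eq' (range n) i (fun _ => σ2),
        if_pos (Finset.mem_range.mpr hi)]
    · rw [if_neg hij']
      apply Finset.sum_eq_zero
      intro ℓ _
      rw [if_neg (by tauto)]
  rw [T1]
  -- cancellation of the two remainder sums
  have cancel : ∑ ℓ ∈ range n, (arH a ((i:ℤ) - ℓ)
        * ∑ m ∈ Finset.Ico (n - ℓ) (n+1), arH a (m:ℤ) * arG c ((j:ℤ) - ℓ - m)
      - arH a ((n:ℤ) - i + ℓ)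
        * ∑ m ∈ range (ℓ+1), arH a (m:ℤ) * arG c ((n:ℤ) + ℓ - j - m)) = 0 := by
    rw [Finset.sum_sub_distrib, sub_eq_zero]
    -- rewrite the Ru side
    have hRu : ∀ ℓ ∈ range n, arH a ((i:ℤ) - ℓ)
        * ∑ m ∈ Finset.Ico (n - ℓ) (n+1), arH a (m:ℤ) * arG c ((j:ℤ) - ℓ - m)
        = ∑ r ∈ range (ℓ+1),
            arH a ((i:ℤ) - ℓ) * arH a ((n:ℤ) - ℓ + r) * arG c ((n:ℤ) + r - j) := by
      intro ℓ hℓ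
      have hℓn := Finset.mem_range.mp hℓ
      rw [Finset.sum_Ico_eq_sum_range]
      have hcard : n + 1 - (n - ℓ) = ℓ + 1 := by omega
      rw [hcard, Finset.mul_sum]
      apply Finset.sum_congr rfl
      intro r hr
      have e1 : ((n - ℓ + r : ℕ) : ℤ) = (n:ℤ) - ℓ + r := by omega
      have e2 : (j:ℤ) - ℓ - ((n:ℤ) - ℓ + r) = -((n:ℤ) + r - j) := by ring
      rw [e1, e2, arG_even, mul_assoc]
    have hRv : ∀ ℓ ∈ range n, arH a ((n:ℤ) - i + ℓ)
        * ∑ m ∈ range (ℓ+1), arH a (m:ℤ) * arG c ((n:ℤ) + ℓ - j - m)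
        = ∑ r ∈ range (ℓ+1),
            arH a ((n:ℤ) - i + ℓ) * arH a ((ℓ:ℤ) - r) * arG c ((n:ℤ) + r - j) := by
      intro ℓ hℓ
      rw [Finset.mul_sum]
      rw [← Finset.sum_range_reflect
        (fun m => arH a ((n:ℤ) - i + ℓ) * (arH a (m:ℤ) * arG c ((n:ℤ) + ℓ - j - m))) (ℓ+1)]
      apply Finset.sum_congr rfl
      intro r hr
      have hr' := Finset.mem_range.mp hr
      have e1 : ((ℓ + 1 - 1 - r : ℕ) : ℤ) = (ℓ:ℤ) - r := by omega
      have e2 : (n:ℤ) + ℓ - j - ((ℓ:ℤ) - r) = (n:ℤ) + r - j := by ring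
      rw [e1, e2, mul_assoc]
    rw [Finset.sum_congr rfl hRu, Finset.sum_congr rfl hRv]
    -- swap the triangular sums
    have swapL : ∑ ℓ ∈ range n, ∑ r ∈ range (ℓ+1),
          arH a ((i:ℤ) - ℓ) * arH a ((n:ℤ) - ℓ + r) * arG c ((n:ℤ) + r - j)
        = ∑ r ∈ range n, ∑ ℓ ∈ Finset.Ico r n,
          arH a ((i:ℤ) - ℓ) * arH a ((n:ℤ) - ℓ + r) * arG c ((n:ℤ) + r - j) := by
      simp only [← Nat.Ico_zero_eq_range]
      rw [Finset.sum_Ico_Ico_comm 0 n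
        (fun r ℓ => arH a ((i:ℤ) - ℓ) * arH a ((n:ℤ) - ℓ + r) * arG c ((n:ℤ) + r - j))]
    have swapR : ∑ ℓ ∈ range n, ∑ r ∈ range (ℓ+1),
          arH a ((n:ℤ) - i + ℓ) * arH a ((ℓ:ℤ) - r) * arG c ((n:ℤ) + r - j)
        = ∑ r ∈ range n, ∑ ℓ ∈ Finset.Ico r n,
          arH a ((n:ℤ) - i + ℓ) * arH a ((ℓ:ℤ) - r) * arG c ((n:ℤ) + r - j) := by
      simp only [← Nat.Ico_zero_eq_range]
      rw [Finset.sum_Ico_Ico_comm 0 n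
        (fun r ℓ => arH a ((n:ℤ) - i + ℓ) * arH a ((ℓ:ℤ) - r) * arG c ((n:ℤ) + r - j))]
    rw [swapL, swapR]
    apply Finset.sum_congr rfl
    intro r hr
    have hrn := Finset.mem_range.mp hr
    have hfac : ∀ (g : ℕ → ℝ), (∑ ℓ ∈ Finset.Ico r n, g ℓ * arG c ((n:ℤ) + r - j))
        = (∑ ℓ ∈ Finset.Ico r n, g ℓ) * arG c ((n:ℤ) + r - j) := by
      intro g; rw [Finset.sum_mul]
    rw [hfac (fun ℓ => arH a ((i:ℤ) - ℓ) * arH a ((n:ℤ) - ℓ + r)),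
      hfac (fun ℓ => arH a ((n:ℤ) - i + ℓ) * arH a ((ℓ:ℤ) - r)),
      arRefl p n hpn a hap i r hi hrn]
  rw [cancel, sub_zero]

noncomputable def arP (a : ℕ → ℝ) (n : ℕ) (x y : ℤ) : ℝ :=
  ∑ ℓ ∈ range n, arH a (x - ℓ) * arH a (y - ℓ)
noncomputable def arQ (a : ℕ → ℝ) (n : ℕ) (x y : ℤ) : ℝ :=
  ∑ ℓ ∈ range n, arH a (x + ℓ) * arH a (y + ℓ)
noncomputable def arF (a : ℕ → ℝ) (n : ℕ) (x y : ℤ) : ℝ :=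
  ∑ s ∈ range (2*n+1), arH a (x + n - s) * arH a (y + n - s)
noncomputable def arK (a : ℕ → ℝ) (n : ℕ) (x y : ℤ) : ℝ :=
  ∑ ℓ ∈ range n, (arH a (x - ℓ) * arH a (y - ℓ)
    - arH a ((n:ℤ) - x + ℓ) * arH a ((n:ℤ) - y + ℓ))

lemma arF_symm (a : ℕ → ℝ) (n : ℕ) (x y : ℤ) : arF a n x y = arF a n y x := by
  unfold arF
  exact Finset.sum_congr rfl (fun s _ => mul_comm _ _)

lemma arF_split (p n : ℕ) (a : ℕ → ℝ) (hpn : p ≤ n) (x y : ℤ)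
    (hx1 : x ≤ (n:ℤ) - 1) :
    arF a n x y = arQ a n (x+1) (y+1) + arP a n x y := by
  unfold arF arP arQ
  have hsplit : ∑ s ∈ range (2*n+1), arH a (x + n - s) * arH a (y + n - s)
      = ∑ s ∈ range n, arH a (x + n - s) * arH a (y + n - s)
        + ∑ s ∈ Finset.Ico n (2*n+1), arH a (x + n - s) * arH a (y + n - s) := by
    simp only [← Nat.Ico_zero_eq_range]
    exact (Finset.sum_Ico_consecutive _ (Nat.zero_le n) (by omega : n ≤ 2*n+1)).symm
  rw [hsplit]
  congr 1
  · rw [← Finset.sum_range_reflect (fun s => arH a (x + 1 + s) * arH a (y + 1 + s)) n]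
    apply Finset.sum_congr rfl
    intro s hs
    have hs' := Finset.mem_range.mp hs
    have e1 : ((n - 1 - s : ℕ) : ℤ) = (n:ℤ) - 1 - s := by omega
    rw [e1]
    congr 2 <;> ring
  · rw [Finset.sum_Ico_eq_sum_range]
    have hcard : 2*n+1 - n = n + 1 := by omega
    rw [hcard, Finset.sum_range_succ]
    have hlast : arH a (x + n - ((n + n : ℕ):ℤ)) * arH a (y + n - ((n + n : ℕ):ℤ)) = 0 := by
      rw [arH_neg a (by push_cast; omega), zero_mul]
    have e : ∀ u ∈ range n, arH a (x + n - ((n + u : ℕ):ℤ)) * arH a (y + n - ((n + u : ℕ):ℤ))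
        = arH a (x - u) * arH a (y - u) := by
      intro u _
      congr 2 <;> push_cast <;> ring
    rw [Finset.sum_congr rfl e, hlast, add_zero]

lemma arF_shift (p n : ℕ) (a : ℕ → ℝ) (hpn : p ≤ n) (hap : ∀ ℓ, p < ℓ → a ℓ = 0)
    (x y : ℤ) (hx0 : 0 ≤ x) (hx1 : x ≤ (n:ℤ) - 1) :
    arF a n (x+1) (y+1) = arF a n x y := by
  unfold arF
  rw [Finset.sum_range_succ' (fun s => arH a (x + 1 + n - s) * arH a (y + 1 + n - s)) (2*n),
    Finset.sum_range_succ (fun s => arH a (x + n - s) * arH a (y + n - s)) (2*n)]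
  have h1 : arH a (x + 1 + (n:ℤ) - ((0:ℕ):ℤ)) * arH a (y + 1 + n - ((0:ℕ):ℤ)) = 0 := by
    rw [arH_big hap (by push_cast; omega), zero_mul]
  have h2 : arH a (x + (n:ℤ) - (2*n:ℕ)) * arH a (y + n - (2*n:ℕ)) = 0 := by
    rw [arH_neg a (by push_cast; omega), zero_mul]
  rw [h1, h2, add_zero, add_zero]
  apply Finset.sum_congr rfl
  intro s _
  congr 2 <;> push_cast <;> ring

lemma arF_shift_iter (p n : ℕ) (a : ℕ → ℝ) (hpn : p ≤ n) (hap : ∀ ℓ, p < ℓ → a ℓ = 0)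
    (t : ℕ) (x y : ℤ) (hx0 : 0 ≤ x) (hxt : x + t ≤ (n:ℤ) - 1) :
    arF a n (x + t) (y + t) = arF a n x y := by
  induction t with
  | zero => simp
  | succ t ih =>
    have e1 : x + ((t+1 : ℕ):ℤ) = (x + t) + 1 := by push_cast; ring
    have e2 : y + ((t+1 : ℕ):ℤ) = (y + t) + 1 := by push_cast; ring
    rw [e1, e2, arF_shift p n a hpn hap (x+t) (y+t) (by omega) (by push_cast at hxt ⊢; omega)]
    exact ih (by push_cast at hxt ⊢; omega)

lemma arK_PQ (a : ℕ → ℝ) (n : ℕ) (x y : ℤ) :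
    arK a n x y = arP a n x y - arQ a n ((n:ℤ) - x) ((n:ℤ) - y) := by
  unfold arK arP arQ
  rw [← Finset.sum_sub_distrib]

lemma arPersym (p n : ℕ) (a : ℕ → ℝ) (hpn : p ≤ n) (hap : ∀ ℓ, p < ℓ → a ℓ = 0)
    (i k : ℕ) (hi : i < n) (hk : k < n) :
    arK a n (i:ℤ) ((n:ℤ) - 1 - k) = arK a n ((n:ℤ) - 1 - i) (k:ℤ) := by
  have split1 := arF_split p n a hpn (i:ℤ) ((n:ℤ)-1-k) (by omega)
  have split2 := arF_split p n a hpn ((n:ℤ)-1-i) (k:ℤ) (by omega)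
  have hFF : arF a n (i:ℤ) ((n:ℤ)-1-k) = arF a n ((n:ℤ)-1-i) (k:ℤ) := by
    rcases le_or_gt i k with h | h
    · have := arF_shift_iter p n a hpn hap (k - i) ((n:ℤ)-1-k) (i:ℤ) (by omega)
        (by push_cast; omega)
      rw [arF_symm a n ((i:ℤ)) ((n:ℤ)-1-k)]
      rw [← this]
      congr 1 <;> push_cast <;> omega
    · have := arF_shift_iter p n a hpn hap (i - k) (k:ℤ) ((n:ℤ)-1-i) (by omega)
        (by push_cast; omega)
      rw [arF_symm a n ((n:ℤ)-1-i) (k:ℤ), ← this]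
      congr 1 <;> push_cast <;> omega
  have e1 : arK a n (i:ℤ) ((n:ℤ)-1-k) = arP a n (i:ℤ) ((n:ℤ)-1-k) - arQ a n ((n:ℤ)-i) ((k:ℤ)+1) := by
    rw [arK_PQ]
    congr 1
    congr 1
    ring
  have e2 : arK a n ((n:ℤ)-1-i) (k:ℤ) = arP a n ((n:ℤ)-1-i) (k:ℤ) - arQ a n ((i:ℤ)+1) ((n:ℤ)-k) := by
    rw [arK_PQ]
    congr 1
    congr 1
    ring
  have q1 : arQ a n ((i:ℤ)+1) (((n:ℤ)-1-k)+1) = arQ a n ((i:ℤ)+1) ((n:ℤ)-k) := by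
    congr 1; ring
  have q2 : arQ a n (((n:ℤ)-1-i)+1) ((k:ℤ)+1) = arQ a n ((n:ℤ)-i) ((k:ℤ)+1) := by
    congr 1; ring
  rw [q1] at split1
  rw [q2] at split2
  rw [e1, e2]
  linarith [split1, split2, hFF]

lemma arEntry' (p n : ℕ) (hpn : p ≤ n) (a : ℕ → ℝ) (σ2 : ℝ) (ha0 : a 0 = 1)
    (hap : ∀ ℓ, p < ℓ → a ℓ = 0) (c : ℕ → ℝ)
    (hYW : ∀ k : ℕ, ∑ ℓ ∈ Finset.range (p + 1), a ℓ * c ((k : ℤ) - (ℓ : ℤ)).natAbs =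
      if k = 0 then σ2 else 0)
    (i j : ℕ) (hi : i < n) (hj : j < n) :
    ∑ k ∈ range n, arK a n (i:ℤ) (k:ℤ) * arG c ((k:ℤ) - j)
      = if i = j then σ2 else 0 := by
  rcases le_or_gt i j with hij | hij
  · exact arEntry p n hpn a σ2 ha0 hap c hYW i j hi hj hij
  · have hrefl := Finset.sum_range_reflect
      (fun k => arK a n (i:ℤ) (k:ℤ) * arG c ((k:ℤ) - j)) n
    rw [← hrefl]
    have hpt : ∀ k ∈ range n, arK a n (i:ℤ) ((n - 1 - k : ℕ):ℤ)
          * arG c (((n - 1 - k : ℕ):ℤ) - j)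
        = arK a n (((n - 1 - i : ℕ)):ℤ) ((k:ℤ))
          * arG c ((k:ℤ) - ((n - 1 - j : ℕ):ℤ)) := by
      intro k hk
      have hk' := Finset.mem_range.mp hk
      have e1 : ((n - 1 - k : ℕ):ℤ) = (n:ℤ) - 1 - k := by omega
      have e2 : ((n - 1 - i : ℕ):ℤ) = (n:ℤ) - 1 - i := by omega
      have e3 : ((n - 1 - k : ℕ):ℤ) - j = -((k:ℤ) - ((n - 1 - j : ℕ):ℤ)) := by omega
      rw [e3, arG_even, e1, arPersym p n a hpn hap i k hi hk', ← e2]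
    rw [Finset.sum_congr rfl hpt]
    have := arEntry p n hpn a σ2 ha0 hap c hYW (n - 1 - i) (n - 1 - j)
      (by omega) (by omega) (by omega)
    have harKdef : ∀ k ∈ range n, arK a n (((n - 1 - i : ℕ)):ℤ) ((k:ℤ))
          * arG c ((k:ℤ) - ((n - 1 - j : ℕ):ℤ))
        = (∑ ℓ ∈ range n, (arH a (((n - 1 - i : ℕ):ℤ) - ℓ) * arH a ((k:ℤ) - ℓ)
          - arH a ((n:ℤ) - (n - 1 - i : ℕ) + ℓ) * arH a ((n:ℤ) - k + ℓ)))
          * arG c ((k:ℤ) - ((n - 1 - j : ℕ):ℤ)) := fun _ _ => rfl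
    rw [Finset.sum_congr rfl harKdef, this, if_neg (by omega), if_neg (by omega)]

lemma arKC (p n : ℕ) (hpn : p ≤ n) (hn : 0 < n) (a : ℕ → ℝ) (σ2 : ℝ) (ha0 : a 0 = 1)
    (hap : ∀ ℓ, p < ℓ → a ℓ = 0) (c : ℕ → ℝ)
    (hYW : ∀ k : ℕ, ∑ ℓ ∈ Finset.range (p + 1), a ℓ * c ((k : ℤ) - (ℓ : ℤ)).natAbs =
      if k = 0 then σ2 else 0) :
    (Matrix.of fun i j : Fin n => arK a n (i:ℤ) (j:ℤ)) * toeplitz c n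
      = σ2 • (1 : Matrix (Fin n) (Fin n) ℝ) := by
  ext i j
  rw [Matrix.mul_apply]
  have hconv : ∑ k : Fin n, (Matrix.of fun i j : Fin n => arK a n (i:ℤ) (j:ℤ)) i k
        * toeplitz c n k j
      = ∑ k ∈ range n, arK a n (i:ℤ) (k:ℤ) * arG c ((k:ℤ) - (j:ℤ)) := by
    rw [← Fin.sum_univ_eq_sum_range (fun k => arK a n (i:ℤ) (k:ℤ) * arG c ((k:ℤ) - (j:ℤ))) n]
    rfl
  rw [hconv, arEntry' p n hpn a σ2 ha0 hap c hYW i j i.isLt j.isLt]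
  simp only [Matrix.smul_apply, Matrix.one_apply, smul_eq_mul]
  by_cases h : (i:ℕ) = (j:ℕ)
  · rw [if_pos h, if_pos (Fin.ext h), mul_one]
  · rw [if_neg h, if_neg (fun hh => h (congrArg Fin.val hh)), mul_zero]

lemma arTrace (p n : ℕ) (hpn : p ≤ n) (hn : 0 < n) (a : ℕ → ℝ)
    (hap : ∀ ℓ, p < ℓ → a ℓ = 0) :
    ∑ i ∈ range n, arK a n (i:ℤ) (i:ℤ)
      = ∑ m ∈ range (n+1), ((n:ℝ) - 2*m) * (a m * a m) := by
  have expand : ∀ i ∈ range n, arK a n (i:ℤ) (i:ℤ)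
      = (∑ ℓ ∈ range n, arH a ((i:ℤ) - ℓ) * arH a ((i:ℤ) - ℓ))
        - ∑ ℓ ∈ range n, arH a ((n:ℤ) - i + ℓ) * arH a ((n:ℤ) - i + ℓ) := by
    intro i _
    unfold arK
    rw [← Finset.sum_sub_distrib]
  rw [Finset.sum_congr rfl expand, Finset.sum_sub_distrib]
  -- part A
  have hA1 : ∀ i ∈ range n, ∑ ℓ ∈ range n, arH a ((i:ℤ) - ℓ) * arH a ((i:ℤ) - ℓ)
      = ∑ m ∈ range (i+1), a m * a m := by
    intro i hi
    have hi' := Finset.mem_range.mp hi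
    have h1 : ∑ ℓ ∈ range n, arH a ((i:ℤ) - ℓ) * arH a ((i:ℤ) - ℓ)
        = ∑ ℓ ∈ range (i+1), arH a ((i:ℤ) - ℓ) * arH a ((i:ℤ) - ℓ) := by
      apply sum_range_ext
      · intro k hk
        by_cases hki : i < k
        · rw [arH_neg a (by omega), zero_mul]
        · omega
      · intro k hk
        rw [arH_neg a (by omega), zero_mul]
    rw [h1, ← Finset.sum_range_reflect (fun m => a m * a m) (i+1)]
    apply Finset.sum_congr rfl
    intro ℓ hℓ
    have hℓ' := Finset.mem_range.mp hℓ
    have e1 : (i:ℤ) - ℓ = ((i + 1 - 1 - ℓ : ℕ) : ℤ) := by omega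
    rw [e1, arH_nat]
  have hA2 : ∑ i ∈ range n, ∑ m ∈ range (i+1), a m * a m
      = ∑ m ∈ range n, ((n - m : ℕ) : ℝ) * (a m * a m) := by
    have := Finset.sum_Ico_Ico_comm 0 n (fun m i => a m * a m)
    simp only [← Nat.Ico_zero_eq_range]
    rw [← this]
    apply Finset.sum_congr rfl
    intro m hm
    rw [Finset.sum_const, Nat.card_Ico, nsmul_eq_mul]
  -- part B
  have hB1 : ∀ i ∈ range n, ∑ ℓ ∈ range n, arH a ((n:ℤ) - i + ℓ) * arH a ((n:ℤ) - i + ℓ)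
      = ∑ m ∈ Finset.Ico (n - i) (n+1), a m * a m := by
    intro i hi
    have hi' := Finset.mem_range.mp hi
    have h1 : ∑ m ∈ Finset.Ico (n - i) (2*n - i), a m * a m
        = ∑ ℓ ∈ range n, arH a ((n:ℤ) - i + ℓ) * arH a ((n:ℤ) - i + ℓ) := by
      rw [Finset.sum_Ico_eq_sum_range]
      have hc : 2*n - i - (n - i) = n := by omega
      rw [hc]
      apply Finset.sum_congr rfl
      intro ℓ _
      have e1 : ((n - i + ℓ : ℕ) : ℤ) = (n:ℤ) - i + ℓ := by omega
      rw [← e1, arH_nat]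
    rw [← h1, ← Finset.sum_Ico_consecutive (fun m => a m * a m)
      (by omega : n - i ≤ n+1) (by omega : n+1 ≤ 2*n - i)]
    have h2 : ∑ m ∈ Finset.Ico (n+1) (2*n - i), a m * a m = 0 := by
      apply Finset.sum_eq_zero
      intro m hm
      have := (Finset.mem_Ico.mp hm).1
      rw [hap m (by omega), zero_mul]
    rw [h2, add_zero]
  have hB2 : ∑ i ∈ range n, ∑ m ∈ Finset.Ico (n - i) (n+1), a m * a m
      = ∑ i ∈ range n, ∑ m ∈ Finset.Ico (i+1) (n+1), a m * a m := by
    rw [← Finset.sum_range_reflect (fun i => ∑ m ∈ Finset.Ico (i+1) (n+1), a m * a m) n]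
    apply Finset.sum_congr rfl
    intro i hi
    have hi' := Finset.mem_range.mp hi
    have : n - 1 - i + 1 = n - i := by omega
    rw [this]
  have hB3 : ∑ i ∈ range n, ∑ m ∈ Finset.Ico (i+1) (n+1), a m * a m
      = ∑ m ∈ range (n+1), (m : ℝ) * (a m * a m) := by
    have e1 : ∀ i ∈ range n, ∑ m ∈ Finset.Ico (i+1) (n+1), a m * a m
        = ∑ m ∈ Finset.Ico i n, a (m+1) * a (m+1) := by
      intro i hi
      rw [Finset.sum_Ico_eq_sum_range, Finset.sum_Ico_eq_sum_range]
      have hc1 : n + 1 - (i+1) = n - i := by omega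
      rw [hc1]
      apply Finset.sum_congr rfl
      intro t _
      have e : i + 1 + t = i + t + 1 := by omega
      rw [e]
    rw [Finset.sum_congr rfl e1, ← Nat.Ico_zero_eq_range,
      Finset.sum_Ico_Ico_comm 0 n (fun i m => a (m+1) * a (m+1))]
    have e2 : ∀ m ∈ Finset.Ico 0 n, ∑ i ∈ Finset.Ico 0 (m+1), a (m+1) * a (m+1)
        = ((m+1 : ℕ) : ℝ) * (a (m+1) * a (m+1)) := by
      intro m _
      rw [Finset.sum_const, Nat.card_Ico, nsmul_eq_mul]
      norm_num
    rw [Finset.sum_congr rfl e2, Nat.Ico_zero_eq_range,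
      Finset.sum_range_succ' (fun m => (m : ℝ) * (a m * a m)) n]
    norm_num
  rw [Finset.sum_congr rfl hA1, Finset.sum_congr rfl hB1, hA2, hB2, hB3]
  have ext : ∑ m ∈ range n, ((n - m : ℕ) : ℝ) * (a m * a m)
      = ∑ m ∈ range (n+1), ((n - m : ℕ) : ℝ) * (a m * a m) := by
    rw [Finset.sum_range_succ]
    simp
  rw [ext, ← Finset.sum_sub_distrib]
  apply Finset.sum_congr rfl
  intro m hm
  have hm' := Finset.mem_range.mp hm
  rw [Nat.cast_sub (by omega : m ≤ n)]
  ring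

/-- for a stationary AR(p) process with coefficients a_0 = 1, a_1, …, a_p
(a_ℓ = 0 for ℓ > p) and innovation variance σ², the normalized trace-inverse of the
covariance matrix C_n of n ≥ p consecutive samples satisfies
M_n = (1/n)tr(C_n⁻¹) = (1/σ²) Σ_{ℓ=0}^{n} (1 − 2ℓ/n) a_ℓ². -/
theorem ar_normalized_trace_inverse (p n : ℕ) (hpn : p ≤ n) (hn : 0 < n)
    (a : ℕ → ℝ) (σ2 : ℝ) (hσ : 0 < σ2) (ha0 : a 0 = 1) (hap : ∀ ℓ, p < ℓ → a ℓ = 0)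
    (c : ℕ → ℝ)
    (hYW : ∀ k : ℕ, ∑ ℓ ∈ Finset.range (p + 1), a ℓ * c ((k : ℤ) - (ℓ : ℤ)).natAbs =
      if k = 0 then σ2 else 0)
    (hPD : (toeplitz c n).PosDef) :
    (1 / (n : ℝ)) * ((toeplitz c n)⁻¹).trace =
      (1 / σ2) * ∑ ℓ ∈ Finset.range (n + 1), (1 - 2 * (ℓ : ℝ) / (n : ℝ)) * a ℓ ^ 2 := by
  have hKC := arKC p n hpn hn a σ2 ha0 hap c hYW
  have hleft : (σ2⁻¹ • (Matrix.of fun i j : Fin n => arK a n (i:ℤ) (j:ℤ)))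
      * toeplitz c n = 1 := by
    rw [Matrix.smul_mul, hKC, smul_smul, inv_mul_cancel₀ (ne_of_gt hσ), one_smul]
  have hinv : (toeplitz c n)⁻¹
      = σ2⁻¹ • (Matrix.of fun i j : Fin n => arK a n (i:ℤ) (j:ℤ)) :=
    Matrix.inv_eq_left_inv hleft
  rw [hinv, Matrix.trace_smul]
  have htr : (Matrix.of fun i j : Fin n => arK a n (i:ℤ) (j:ℤ)).trace
      = ∑ m ∈ range (n+1), ((n:ℝ) - 2*m) * (a m * a m) := by
    rw [Matrix.trace, ← arTrace p n hpn hn a hap,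
      ← Fin.sum_univ_eq_sum_range (fun i => arK a n (i:ℤ) (i:ℤ)) n]
    rfl
  rw [htr, smul_eq_mul, Finset.mul_sum, Finset.mul_sum, Finset.mul_sum]
  apply Finset.sum_congr rfl
  intro m hm
  have hn' : (n:ℝ) ≠ 0 := Nat.cast_ne_zero.mpr (by omega)
  have hs' : σ2 ≠ 0 := ne_of_gt hσ
  field_simp
end

section
/- Let v = (v_0,…,v_{n−1})ᵀ be the first column of T⁻¹ for an invertible symmetric Toeplitz n×n matrix T, with v_0 ≠ 0. Let V and U be the n×n lower-triangular Toeplitz matrices with first columns v and u = (0, v_{n−1}, v_{n−2}, …, v_1)ᵀ respectively. Then T⁻¹ = (1/v_0)(V Vᵀ − U Uᵀ). -/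
open Matrix
open Finset

/-- The lower-triangular Toeplitz matrix with first column w:
entries [W]_{i,j} = w_{i−j} for i ≥ j and 0 otherwise. -/
def lowerToeplitz {n : ℕ} (w : Fin n → ℝ) : Matrix (Fin n) (Fin n) ℝ :=
  Matrix.of fun i j => if h : (j : ℕ) ≤ (i : ℕ) then w ⟨(i : ℕ) - (j : ℕ), by omega⟩ else 0

set_option maxHeartbeats 1600000 in
/-- Gohberg–Semençul: let T be an invertible symmetric Toeplitz
(n+1)×(n+1) matrix, v the first column of T⁻¹ with v_0 ≠ 0, and
u = (0, v_n, v_{n−1}, …, v_1)ᵀ. With V, U the lower-triangular Toeplitz matrices with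
first columns v and u, one has T⁻¹ = (1/v_0)(V Vᵀ − U Uᵀ). -/
theorem gohberg_semencul (n : ℕ) (c : ℕ → ℝ)
    (hT : IsUnit (toeplitz c (n + 1)).det)
    (v : Fin (n + 1) → ℝ) (hv : v = fun i => (toeplitz c (n + 1))⁻¹ i 0)
    (hv0 : v 0 ≠ 0)
    (u : Fin (n + 1) → ℝ)
    (hu : u = fun i : Fin (n + 1) => if h : (i : ℕ) = 0 then 0 else v ⟨n + 1 - (i : ℕ), by omega⟩) :
    (toeplitz c (n + 1))⁻¹ =
      (1 / v 0) •
        (lowerToeplitz v * (lowerToeplitz v)ᵀ - lowerToeplitz u * (lowerToeplitz u)ᵀ) := by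
  set T := toeplitz c (n + 1) with hTdef
  set B := T⁻¹ with hBdef
  have hBT : B * T = 1 := Matrix.nonsing_inv_mul T hT
  have hTB : T * B = 1 := Matrix.mul_nonsing_inv T hT
  have hTsymm : Tᵀ = T := by
    ext i j
    simp only [hTdef, toeplitz, Matrix.transpose_apply, Matrix.of_apply]
    congr 1
    omega
  have hBsymmM : Bᵀ = B := by
    rw [hBdef, Matrix.transpose_nonsing_inv, hTsymm]
  have hBsymm : ∀ i j, B i j = B j i := by
    intro i j
    conv_lhs => rw [← hBsymmM]
    rfl
  -- the bridge between Fin sums and range sums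
  have key_sum : ∀ (g : Fin (n+1) → ℝ) (gN : ℕ → ℝ), (∀ k : Fin (n+1), gN k.val = g k) →
      ∑ k : Fin (n+1), g k = ∑ k ∈ range (n+1), gN k := by
    intro g gN h
    rw [← Fin.sum_univ_eq_sum_range gN (n+1)]
    exact Finset.sum_congr rfl fun k _ => (h k).symm
  -- columns of B, extended to ℕ by zero
  set sB : Fin (n+1) → ℕ → ℝ := fun l m => if h : m < n+1 then B ⟨m, h⟩ l else 0 with hsB
  have hsBeq : ∀ (l : Fin (n+1)) (m : ℕ) (hm : m < n+1), sB l m = B ⟨m, hm⟩ l := by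
    intro l m hm
    simp [hsB, hm, show m ≤ n by omega]
  -- the fundamental identity : T * B = 1 read column-wise over ℕ sums
  have hcol : ∀ (l : Fin (n+1)) (i : ℕ), i < n+1 →
      ∑ k ∈ range (n+1), c ((i:ℤ)-(k:ℤ)).natAbs * sB l k = if i = l.val then 1 else 0 := by
    intro l i hi
    have h2 : ∑ k : Fin (n+1), T ⟨i, hi⟩ k * B k l
        = ∑ k ∈ range (n+1), c ((i:ℤ)-(k:ℤ)).natAbs * sB l k := by
      apply key_sum
      intro k
      simp only [hsB, k.isLt, dif_pos, hTdef, toeplitz, Matrix.of_apply, Fin.eta]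
    rw [← h2, ← Matrix.mul_apply, hTB, Matrix.one_apply]
    simp [Fin.ext_iff]
  -- v extended to ℕ by zero
  set fv : ℕ → ℝ := fun m => if h : m < n+1 then v ⟨m, h⟩ else 0 with hfv
  have hfvB : ∀ m, fv m = sB 0 m := by
    intro m
    simp only [hfv, hsB, hv]
  have hL1 : ∀ i : ℕ, i < n+1 →
      ∑ k ∈ range (n+1), c ((i:ℤ)-(k:ℤ)).natAbs * fv k = if i = 0 then 1 else 0 := by
    intro i hi
    simp only [hfvB]
    rw [hcol 0 i hi]
    rw [Fin.val_zero]
  set β : ℝ := ∑ k ∈ range (n+1), c (n+1-k) * fv k with hβ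
  have hSn1 : ∑ k ∈ range (n+1), c (((n:ℤ)+1)-(k:ℤ)).natAbs * fv k = β := by
    rw [hβ]
    apply Finset.sum_congr rfl
    intro k hk
    rw [mem_range] at hk
    congr 2
    omega
  have hL2 : ∀ i : ℕ, i < n+1 →
      ∑ k ∈ range (n+1), c ((i:ℤ)-(k:ℤ)).natAbs * fv (n-k) = if i = n then 1 else 0 := by
    intro i hi
    rw [← Finset.sum_range_reflect]
    have hc : ∀ j ∈ range (n+1), c ((i:ℤ)-((n+1-1-j:ℕ):ℤ)).natAbs * fv (n-(n+1-1-j))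
        = c (((n-i:ℕ):ℤ)-(j:ℤ)).natAbs * fv j := by
      intro j hj
      rw [mem_range] at hj
      have h1 : n - (n+1-1-j) = j := by omega
      have h2 : ((i:ℤ)-((n+1-1-j:ℕ):ℤ)).natAbs = (((n-i:ℕ):ℤ)-(j:ℤ)).natAbs := by omega
      rw [h1, h2]
    rw [Finset.sum_congr rfl hc, hL1 (n-i) (by omega)]
    by_cases h : i = n
    · simp [h]
    · rw [if_neg h, if_neg (by omega)]
  have hL3 : ∀ i : ℕ, i < n+1 →
      ∑ k ∈ range (n+1), c ((i:ℤ)-(k:ℤ)).natAbs * (if k = 0 then 0 else fv (n+1-k))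
        = (if i = 0 then β else 0) - fv 0 * c (n+1-i) := by
    intro i hi
    rw [Finset.sum_range_succ']
    rw [← Finset.sum_range_reflect]
    have hc : ∀ k ∈ range n, c ((i:ℤ)-(((n-1-k:ℕ)+1:ℕ):ℤ)).natAbs * (if (n-1-k)+1 = 0 then 0 else fv (n+1-((n-1-k)+1)))
        = c ((((n+1-i:ℕ):ℤ))-((k+1:ℕ):ℤ)).natAbs * fv (k+1) := by
      intro k hk
      rw [mem_range] at hk
      have h1 : n+1-((n-1-k)+1) = k+1 := by omega
      have h2 : ((i:ℤ)-(((n-1-k:ℕ)+1:ℕ):ℤ)).natAbs = ((((n+1-i:ℕ):ℤ))-((k+1:ℕ):ℤ)).natAbs := by omega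
      rw [if_neg (Nat.succ_ne_zero _), h1, h2]
    rw [Finset.sum_congr rfl hc]
    have hg0 : (c ((i:ℤ)-((0:ℕ):ℤ)).natAbs * (if (0:ℕ) = 0 then 0 else fv (n+1-0))) = 0 := by
      rw [if_pos rfl, mul_zero]
    rw [hg0, add_zero]
    have hstep : ∑ k ∈ range n, c ((((n+1-i:ℕ):ℤ))-((k+1:ℕ):ℤ)).natAbs * fv (k+1)
        = (∑ k ∈ range (n+1), c ((((n+1-i:ℕ):ℤ))-(k:ℤ)).natAbs * fv k) - c (n+1-i) * fv 0 := by
      rw [Finset.sum_range_succ']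
      have h5 : ((((n+1-i:ℕ):ℤ))-((0:ℕ):ℤ)).natAbs = n+1-i := by omega
      have h4 : c ((((n+1-i:ℕ):ℤ))-((0:ℕ):ℤ)).natAbs * fv 0 = c (n+1-i) * fv 0 := by rw [h5]
      rw [h4]
      ring
    rw [hstep]
    by_cases h : i = 0
    · have h3 : ∑ k ∈ range (n+1), c ((((n+1-i:ℕ):ℤ))-(k:ℤ)).natAbs * fv k
          = ∑ k ∈ range (n+1), c (((n:ℤ)+1)-(k:ℤ)).natAbs * fv k := by
        apply Finset.sum_congr rfl
        intro k hk
        rw [mem_range] at hk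
        congr 3
        omega
      rw [h3, hSn1, if_pos h, h]
      ring
    · rw [hL1 (n+1-i) (by omega), if_neg (by omega), if_neg h]
      ring
  have hL4 : ∀ i : ℕ, i < n+1 →
      ∑ k ∈ range (n+1), c ((i:ℤ)-(k:ℤ)).natAbs * fv (k+1)
        = (if i = n then β else 0) - fv 0 * c (i+1) := by
    intro i hi
    have hc : ∀ k ∈ range (n+1), c ((i:ℤ)-(k:ℤ)).natAbs * fv (k+1)
        = c ((((i+1:ℕ):ℤ))-(((k+1:ℕ)):ℤ)).natAbs * fv (k+1) := by
      intro k hk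
      congr 3
      omega
    rw [Finset.sum_congr rfl hc]
    have h2 : ∑ k ∈ range (n+2), c ((((i+1:ℕ):ℤ))-((k:ℕ):ℤ)).natAbs * fv k
        = (∑ k ∈ range (n+1), c ((((i+1:ℕ):ℤ))-(((k+1:ℕ)):ℤ)).natAbs * fv (k+1)) + c (i+1) * fv 0 := by
      rw [Finset.sum_range_succ']
      have h5 : ((((i+1:ℕ):ℤ))-((0:ℕ):ℤ)).natAbs = i+1 := by omega
      have h4 : c ((((i+1:ℕ):ℤ))-((0:ℕ):ℤ)).natAbs * fv 0 = c (i+1) * fv 0 := by rw [h5]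
      rw [h4]
    have h3 : ∑ k ∈ range (n+2), c ((((i+1:ℕ):ℤ))-((k:ℕ):ℤ)).natAbs * fv k
        = ∑ k ∈ range (n+1), c ((((i+1:ℕ):ℤ))-((k:ℕ):ℤ)).natAbs * fv k := by
      rw [Finset.sum_range_succ]
      have h5 : fv (n+1) = 0 := by simp [hfv]
      rw [h5, mul_zero, add_zero]
    have h6 := h2.symm.trans h3
    by_cases h : i = n
    · have h4 : ∑ k ∈ range (n+1), c ((((i+1:ℕ):ℤ))-((k:ℕ):ℤ)).natAbs * fv k
          = ∑ k ∈ range (n+1), c (((n:ℤ)+1)-(k:ℤ)).natAbs * fv k := by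
        apply Finset.sum_congr rfl
        intro k hk
        rw [mem_range] at hk
        congr 3
        omega
      rw [h4, hSn1] at h6
      rw [if_pos h]
      linarith [h6]
    · rw [hL1 (i+1) (by omega), if_neg (by omega)] at h6
      rw [if_neg h]
      linarith [h6]
  -- auxiliary vectors over Fin (n+1)
  set bb : Fin (n+1) → ℝ := fun k => c (n+1-(k:ℕ)) with hbb
  set aa : Fin (n+1) → ℝ := fun k => c ((k:ℕ)+1) with haa
  set yy : Fin (n+1) → ℝ := fun k => fv (n-(k:ℕ)) with hyy
  set pp : Fin (n+1) → ℝ := fun k => fv ((k:ℕ)+1) with hpp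
  have hfveq : ∀ (k : Fin (n+1)), fv (k:ℕ) = v k := by
    intro k
    simp [hfv, k.isLt, show (k:ℕ) ≤ n by omega]
  have hfv0 : fv 0 = v 0 := by simp [hfv]
  have hueq : ∀ (k : Fin (n+1)), (if (k:ℕ) = 0 then 0 else fv (n+1-(k:ℕ))) = u k := by
    intro k
    by_cases h : (k:ℕ) = 0
    · simp [h, hu, show k = 0 from Fin.ext h]
    · have hlt : n+1-(k:ℕ) < n+1 := by omega
      simp only [hu, if_neg h, dif_neg h, hfv]
      rw [dif_pos hlt]
  have hmulVec : ∀ (x : Fin (n+1) → ℝ) (i : Fin (n+1)), (T *ᵥ x) i = ∑ k : Fin (n+1), T i k * x k := by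
    intro x i
    rfl
  have hTentry : ∀ (i k : Fin (n+1)), T i k = c (((i:ℕ):ℤ)-((k:ℕ):ℤ)).natAbs := by
    intro i k
    rfl
  -- T *ᵥ v = e 0
  have hTv : T *ᵥ v = (fun i : Fin (n+1) => if i = 0 then 1 else 0) := by
    funext i
    rw [hmulVec, key_sum _ (fun k => c (((i:ℕ):ℤ)-(k:ℤ)).natAbs * fv k)
      (fun k => by simp only [hTentry, hfveq]), hL1 i i.isLt]
    by_cases h : i = 0
    · subst h; simp
    · rw [if_neg h, if_neg (fun h' => h (Fin.ext (by rw [h', Fin.val_zero])))]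
  -- T *ᵥ yy = e n
  have hTy : T *ᵥ yy = (fun i : Fin (n+1) => if (i:ℕ) = n then 1 else 0) := by
    funext i
    rw [hmulVec, key_sum _ (fun k => c (((i:ℕ):ℤ)-(k:ℤ)).natAbs * fv (n-k))
      (fun k => by simp only [hTentry, hyy]), hL2 i i.isLt]
  -- T *ᵥ u = β • e0 - v0 • bb
  have hTu : T *ᵥ u = (fun i : Fin (n+1) => (if (i:ℕ) = 0 then β else 0) - v 0 * bb i) := by
    funext i
    rw [hmulVec, key_sum _ (fun k => c (((i:ℕ):ℤ)-(k:ℤ)).natAbs * (if k = 0 then 0 else fv (n+1-k)))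
      (fun k => by rw [← hueq k, hTentry]), hL3 i i.isLt]
    rw [hfv0]
  -- T *ᵥ pp = β • en - v0 • aa
  have hTp : T *ᵥ pp = (fun i : Fin (n+1) => (if (i:ℕ) = n then β else 0) - v 0 * aa i) := by
    funext i
    rw [hmulVec, key_sum _ (fun k => c (((i:ℕ):ℤ)-(k:ℤ)).natAbs * fv (k+1))
      (fun k => by simp only [hTentry, hpp]), hL4 i i.isLt]
    rw [hfv0]
  -- inverting: whoever T maps to y, equals B *ᵥ y
  have hBmul : ∀ (x w : Fin (n+1) → ℝ), T *ᵥ x = w → x = B *ᵥ w := by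
    intro x w hxw
    rw [← hxw, Matrix.mulVec_mulVec, hBT, Matrix.one_mulVec]
  -- B applied to basis vectors gives columns
  have hBe : ∀ (l : Fin (n+1)), (B *ᵥ (fun k => if k = l then 1 else 0)) = fun i => B i l := by
    intro l
    funext i
    simp [Matrix.mulVec, dotProduct, mul_ite, mul_one, mul_zero]
  have hmulVecB : ∀ (x : Fin (n+1) → ℝ) (i : Fin (n+1)), (B *ᵥ x) i = ∑ k : Fin (n+1), B i k * x k := by
    intro x i
    rfl
  have hsplit : ∀ (r1 r2 : ℝ) (w1 w2 : Fin (n+1) → ℝ),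
      B *ᵥ (fun k => r1 * w1 k - r2 * w2 k) = fun i => r1 * (B *ᵥ w1) i - r2 * (B *ᵥ w2) i := by
    intro r1 r2 w1 w2
    funext i
    rw [hmulVecB]
    simp only [mul_sub, Finset.sum_sub_distrib, hmulVecB, Finset.mul_sum, mul_left_comm]
  have hsplit3 : ∀ (r1 r2 r3 : ℝ) (w1 w2 w3 : Fin (n+1) → ℝ),
      B *ᵥ (fun k => (r1 * w1 k + r2 * w2 k) - r3 * w3 k)
        = fun i => (r1 * (B *ᵥ w1) i + r2 * (B *ᵥ w2) i) - r3 * (B *ᵥ w3) i := by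
    intro r1 r2 r3 w1 w2 w3
    funext i
    rw [hmulVecB]
    simp only [mul_sub, mul_add, Finset.sum_sub_distrib, Finset.sum_add_distrib, hmulVecB,
      Finset.mul_sum, mul_left_comm]
  set lastF : Fin (n+1) := ⟨n, by omega⟩ with hlastF
  -- column n of B is yy
  have hTy' : T *ᵥ yy = (fun i : Fin (n+1) => if i = lastF then 1 else 0) := by
    rw [hTy]
    funext i
    by_cases h : (i:ℕ) = n
    · rw [if_pos h, if_pos (by simp [Fin.ext_iff, hlastF, h])]
    · rw [if_neg h, if_neg (by simp [Fin.ext_iff, hlastF, h])]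
  have hcoln : ∀ i, B i lastF = yy i := by
    intro i
    have h1 := hBmul yy _ hTy'
    rw [hBe lastF] at h1
    exact (congrFun h1 i).symm
  have hcol0 : ∀ i, B i 0 = v i := by
    intro i
    rw [hv]
  -- B *ᵥ bb
  have hTu' : T *ᵥ u = fun i => β * (if i = (0:Fin (n+1)) then 1 else 0) - v 0 * bb i := by
    rw [hTu]
    funext i
    by_cases h : (i:ℕ) = 0
    · rw [if_pos h, if_pos (by simp [Fin.ext_iff, h])]
      ring
    · rw [if_neg h, if_neg (by simp [Fin.ext_iff, h])]
      ring
  have hBbv : ∀ i, (B *ᵥ bb) i = (β * v i - u i) / v 0 := by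
    intro i
    have h8 := hBmul u _ hTu'
    rw [hsplit β (v 0) _ bb, hBe 0] at h8
    have h9 := congrFun h8 i
    simp only [] at h9
    rw [hcol0 i] at h9
    rw [eq_div_iff hv0]
    linear_combination h9
  -- B *ᵥ aa
  have hTp' : T *ᵥ pp = fun i => β * (if i = lastF then 1 else 0) - v 0 * aa i := by
    rw [hTp]
    funext i
    by_cases h : (i:ℕ) = n
    · rw [if_pos h, if_pos (by simp [Fin.ext_iff, hlastF, h])]
      ring
    · rw [if_neg h, if_neg (by simp [Fin.ext_iff, hlastF, h])]
      ring
  have hBav : ∀ i, (B *ᵥ aa) i = (β * yy i - pp i) / v 0 := by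
    intro i
    have h8 := hBmul pp _ hTp'
    rw [hsplit β (v 0) _ aa, hBe lastF] at h8
    have h9 := congrFun h8 i
    simp only [] at h9
    rw [hcoln i] at h9
    rw [eq_div_iff hv0]
    linear_combination h9
  -- the displacement identity
  have hdisp : ∀ (i j : Fin (n+1)) (hi1 : 0 < (i:ℕ)) (hj1 : 0 < (j:ℕ)),
      B ⟨(i:ℕ)-1, by omega⟩ ⟨(j:ℕ)-1, by omega⟩
        = B i j + (u i * u j - v i * v j) / v 0 := by
    intro j0 j hi1 hj1
    set j' : Fin (n+1) := ⟨(j:ℕ)-1, by omega⟩ with hj'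
    have hjv : (j' : ℕ) = (j:ℕ)-1 := rfl
    set zsN : ℕ → ℝ := fun m => if m = 0 then 0 else sB j' (m-1) with hzsN
    set α : ℝ := ∑ k ∈ range (n+1), c (k+1) * sB j' k with hα
    have hTzsN : ∀ i : ℕ, i < n+1 → ∑ k ∈ range (n+1), c ((i:ℤ)-(k:ℤ)).natAbs * zsN k
        = ((if i = (j:ℕ) then 1 else 0) + (if i = 0 then α else 0)) - sB j' n * c (n+1-i) := by
      intro i hi
      rw [Finset.sum_range_succ']
      have hg0 : c ((i:ℤ)-((0:ℕ):ℤ)).natAbs * zsN 0 = 0 := by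
        simp [hzsN]
      rw [hg0, add_zero]
      have hgk : ∀ k ∈ range n, c ((i:ℤ)-((k+1:ℕ):ℤ)).natAbs * zsN (k+1)
          = c ((i:ℤ)-((k+1:ℕ):ℤ)).natAbs * sB j' k := by
        intro k hk
        simp [hzsN]
      rw [Finset.sum_congr rfl hgk]
      by_cases h : i = 0
      · subst h
        have hc2 : ∀ k ∈ range n, c (((0:ℕ):ℤ)-((k+1:ℕ):ℤ)).natAbs * sB j' k = c (k+1) * sB j' k := by
          intro k hk
          have he : (((0:ℕ):ℤ)-((k+1:ℕ):ℤ)).natAbs = k+1 := by omega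
          rw [he]
        rw [Finset.sum_congr rfl hc2]
        have hαs : α = (∑ k ∈ range n, c (k+1) * sB j' k) + c (n+1) * sB j' n := by
          rw [hα, Finset.sum_range_succ]
        rw [if_neg (by omega), if_pos rfl]
        have : n+1-0 = n+1 := by omega
        rw [this]
        linarith [hαs]
      · have hc2 : ∀ k ∈ range n, c ((i:ℤ)-((k+1:ℕ):ℤ)).natAbs * sB j' k
            = c (((i-1:ℕ):ℤ)-(k:ℤ)).natAbs * sB j' k := by
          intro k hk
          have he : ((i:ℤ)-((k+1:ℕ):ℤ)).natAbs = (((i-1:ℕ):ℤ)-(k:ℤ)).natAbs := by omega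
          rw [he]
        rw [Finset.sum_congr rfl hc2]
        have hss : ∑ k ∈ range n, c (((i-1:ℕ):ℤ)-(k:ℤ)).natAbs * sB j' k
            = (∑ k ∈ range (n+1), c (((i-1:ℕ):ℤ)-(k:ℤ)).natAbs * sB j' k) - sB j' n * c (n+1-i) := by
          rw [Finset.sum_range_succ]
          have he : (((i-1:ℕ):ℤ)-((n:ℕ):ℤ)).natAbs = n+1-i := by omega
          rw [he]
          ring
        rw [hss, hcol j' (i-1) (by omega)]
        have hjv : (j' : ℕ) = (j:ℕ)-1 := rfl
        by_cases h2 : i = (j:ℕ)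
        · rw [if_pos (by omega), if_pos h2, if_neg h]
          ring
        · rw [if_neg (by omega), if_neg h2, if_neg h]
          ring
    -- lift to Fin level
    set zs : Fin (n+1) → ℝ := fun k => zsN (k:ℕ) with hzs
    have hTzs : T *ᵥ zs = fun i : Fin (n+1) =>
        (1 * (if i = j then 1 else 0) + α * (if i = (0:Fin (n+1)) then 1 else 0)) - sB j' n * bb i := by
      funext i
      rw [hmulVec, key_sum _ (fun k => c (((i:ℕ):ℤ)-(k:ℤ)).natAbs * zsN k)
        (fun k => by simp only [hTentry, hzs]), hTzsN i i.isLt]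
      have e1 : (if (i:ℕ) = (j:ℕ) then (1:ℝ) else 0) = 1 * (if i = j then 1 else 0) := by
        by_cases h : i = j
        · rw [if_pos h, if_pos (by simp [Fin.ext_iff, h]), one_mul]
        · rw [if_neg h, if_neg (by simpa [Fin.ext_iff] using h), one_mul]
      have e2 : (if (i:ℕ) = 0 then α else 0) = α * (if i = (0:Fin (n+1)) then 1 else 0) := by
        by_cases h : (i:ℕ) = 0
        · rw [if_pos h, if_pos (by simp [Fin.ext_iff, h])]
          ring
        · rw [if_neg h, if_neg (by simp [Fin.ext_iff, h])]
          ring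
      rw [e1, e2]
    have hzsB := hBmul zs _ hTzs
    rw [hsplit3 1 α (sB j' n) _ _ bb, hBe j, hBe 0] at hzsB
    have hval := congrFun hzsB j0
    simp only [] at hval
    -- zs j0 = B ⟨j0-1⟩ j'
    have hzsj0 : zs j0 = B ⟨(j0:ℕ)-1, by omega⟩ j' := by
      have h1 : zs j0 = (if (j0:ℕ) = 0 then 0 else sB j' ((j0:ℕ)-1)) := rfl
      rw [h1, if_neg (by omega), hsBeq j' _ (by omega)]
    -- identify the scalars
    have hsn : sB j' n = u j := by
      rw [hsBeq j' n (by omega), hBsymm]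
      have h2 : B j' ⟨n, by omega⟩ = yy j' := hcoln j'
      rw [h2]
      have h3 : yy j' = fv (n+1-(j:ℕ)) := by
        simp only [hyy]
        congr 1
        omega
      rw [h3, ← hueq j, if_neg (by omega)]
    have hαval : α = (β * u j - v j) / v 0 := by
      have h1 : α = (B *ᵥ aa) j' := by
        rw [hmulVecB, key_sum (fun k => B j' k * aa k) (fun m => c (m+1) * sB j' m) ?_, hα]
        intro k
        simp only [hsB, k.isLt, dif_pos, Fin.eta, haa]
        rw [mul_comm, hBsymm]
      rw [h1, hBav j']
      have h2 : yy j' = u j := by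
        simp only [hyy]
        rw [← hueq j, if_neg (by omega)]
        congr 1
        omega
      have h3 : pp j' = v j := by
        simp only [hpp]
        have h4 : (j':ℕ)+1 = (j:ℕ) := by omega
        rw [h4, hfveq]
      rw [h2, h3]
    rw [hzsj0] at hval
    rw [hval, hcol0, hBbv, hsn, hαval]
    field_simp
    ring
  -- shift lemma for lower-Toeplitz Gram sums
  have hshift : ∀ (w : Fin (n+1) → ℝ) (i j : Fin (n+1)), 0 < (i:ℕ) → 0 < (j:ℕ) →
      ∑ k : Fin (n+1), lowerToeplitz w i k * lowerToeplitz w j k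
        = w i * w j + ∑ k : Fin (n+1),
            lowerToeplitz w ⟨(i:ℕ)-1, by omega⟩ k * lowerToeplitz w ⟨(j:ℕ)-1, by omega⟩ k := by
    intro w i j hi hj
    set WN : ℕ → ℕ → ℝ := fun l m => if h : m ≤ l ∧ l < n+1 then w ⟨l-m, by omega⟩ else 0 with hWN
    have hWeq2 : ∀ (l : ℕ) (hl : l < n+1) (k : Fin (n+1)), WN l (k:ℕ) = lowerToeplitz w ⟨l,hl⟩ k := by
      intro l hl k
      by_cases h : (k:ℕ) ≤ l
      · simp only [hWN, lowerToeplitz, Matrix.of_apply]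
        rw [dif_pos ⟨h, hl⟩, dif_pos h]
      · simp only [hWN, lowerToeplitz, Matrix.of_apply]
        rw [dif_neg (by omega), dif_neg (by omega)]
    have hbd : (i:ℕ) < n+1 := i.isLt
    have hbd2 : (j:ℕ) < n+1 := j.isLt
    rw [key_sum _ (fun m => WN (i:ℕ) m * WN (j:ℕ) m)
      (fun k => by
        show WN (i:ℕ) (k:ℕ) * WN (j:ℕ) (k:ℕ) = _
        rw [hWeq2 (i:ℕ) i.isLt k, hWeq2 (j:ℕ) j.isLt k, Fin.eta, Fin.eta]),
      key_sum _ (fun m => WN ((i:ℕ)-1) m * WN ((j:ℕ)-1) m)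
      (fun k => by
        show WN ((i:ℕ)-1) (k:ℕ) * WN ((j:ℕ)-1) (k:ℕ) = _
        rw [hWeq2 ((i:ℕ)-1) (by omega) k, hWeq2 ((j:ℕ)-1) (by omega) k])]
    rw [Finset.sum_range_succ', Finset.sum_range_succ]
    have h0 : WN (i:ℕ) 0 * WN (j:ℕ) 0 = w i * w j := by
      have e : ∀ (l : Fin (n+1)), WN (l:ℕ) 0 = w l := by
        intro l
        simp only [hWN]
        rw [dif_pos ⟨Nat.zero_le _, l.isLt⟩]
        exact congrArg w (Fin.ext (by simp))
      rw [e i, e j]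
    have hn : WN ((i:ℕ)-1) n * WN ((j:ℕ)-1) n = 0 := by
      simp only [hWN]
      rw [dif_neg (by omega)]
      ring
    have hterm : ∀ k ∈ range n, WN (i:ℕ) (k+1) * WN (j:ℕ) (k+1) = WN ((i:ℕ)-1) k * WN ((j:ℕ)-1) k := by
      intro k hk
      have e1 : ∀ l : ℕ, 0 < l → l < n+1 → WN l (k+1) = WN (l-1) k := by
        intro l hl0 hl
        by_cases h : k+1 ≤ l
        · simp only [hWN]
          rw [dif_pos ⟨h, hl⟩, dif_pos ⟨by omega, by omega⟩]
          exact congrArg w (Fin.ext (by simp; omega))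
        · simp only [hWN]
          rw [dif_neg (by omega), dif_neg (by omega)]
      rw [e1 (i:ℕ) hi hbd, e1 (j:ℕ) hj hbd2]
    rw [Finset.sum_congr rfl hterm, h0, hn]
    ring
  -- base-case sums
  have hbase : ∀ (w : Fin (n+1) → ℝ) (j : Fin (n+1)),
      ∑ k : Fin (n+1), lowerToeplitz w 0 k * lowerToeplitz w j k = w 0 * w j := by
    intro w j
    rw [Finset.sum_eq_single (0 : Fin (n+1))]
    · have e1 : lowerToeplitz w 0 0 = w 0 := by
        simp only [lowerToeplitz, Matrix.of_apply]
        rw [dif_pos (le_refl _)]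
        exact congrArg w (Fin.ext (by simp))
      have e2 : lowerToeplitz w j 0 = w j := by
        simp only [lowerToeplitz, Matrix.of_apply]
        rw [dif_pos (by simp)]
        exact congrArg w (Fin.ext (by simp))
      rw [e1, e2]
    · intro k _ hk
      have e3 : lowerToeplitz w 0 k = 0 := by
        simp only [lowerToeplitz, Matrix.of_apply]
        rw [dif_neg (fun h => hk (Fin.ext (by simp only [Fin.val_zero] at h ⊢; omega)))]
      rw [e3, zero_mul]
    · intro h
      exact absurd (Finset.mem_univ _) h
  -- main induction
  have hmain : ∀ (m : ℕ) (i j : Fin (n+1)), min (i:ℕ) (j:ℕ) = m →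
      B i j = (1/v 0) * (∑ k : Fin (n+1), lowerToeplitz v i k * lowerToeplitz v j k
                        - ∑ k : Fin (n+1), lowerToeplitz u i k * lowerToeplitz u j k) := by
    intro m
    induction m with
    | zero =>
      intro i j hm
      have hu0 : u 0 = 0 := by simp [hu]
      by_cases h : (i:ℕ) = 0
      · have hi0 : i = 0 := Fin.ext (by simp [h])
        subst hi0
        rw [hbase v j, hbase u j, hu0, zero_mul]
        have hB0j : B 0 j = v j := by
          rw [hBsymm, hcol0]
        rw [hB0j]
        field_simp
        ring
      · have hj0 : j = 0 := Fin.ext (by rw [Fin.val_zero]; omega)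
        subst hj0
        have c1 : ∑ k : Fin (n+1), lowerToeplitz v i k * lowerToeplitz v 0 k = v 0 * v i := by
          rw [← hbase v i]
          exact Finset.sum_congr rfl fun k _ => mul_comm _ _
        have c2 : ∑ k : Fin (n+1), lowerToeplitz u i k * lowerToeplitz u 0 k = u 0 * u i := by
          rw [← hbase u i]
          exact Finset.sum_congr rfl fun k _ => mul_comm _ _
        rw [c1, c2, hu0, zero_mul, hcol0]
        field_simp
        ring
    | succ m ih =>
      intro i j hm
      have hi1 : 0 < (i:ℕ) := by omega
      have hj1 : 0 < (j:ℕ) := by omega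
      have hmin : min ((⟨(i:ℕ)-1, by omega⟩ : Fin (n+1)):ℕ) ((⟨(j:ℕ)-1, by omega⟩ : Fin (n+1)):ℕ) = m := by
        simp only [Fin.val_mk]
        omega
      have hIH := ih ⟨(i:ℕ)-1, by omega⟩ ⟨(j:ℕ)-1, by omega⟩ hmin
      have hd := hdisp i j hi1 hj1
      rw [hshift v i j hi1 hj1, hshift u i j hi1 hj1]
      linear_combination hIH - hd
  -- assembly
  ext i j
  have h := hmain (min (i:ℕ) (j:ℕ)) i j rfl
  rw [Matrix.smul_apply, Matrix.sub_apply, Matrix.mul_apply, Matrix.mul_apply]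
  simp only [Matrix.transpose_apply, smul_eq_mul]
  rw [h]
end

section
/- Let a_0 = 1, a_1, …, a_p (a_p ≠ 0) and σ² > 0 define a stable AR(p) process with covariance sequence c_0, …, c_p (positive definite C_{p+1}). Among all c_{p+1} ∈ ℝ extending to an AR process of order at most p+1 consistent with c_0,…,c_p, the two-sided prediction LMMSE σ'²/Σ(a'_ℓ)² of the extended AR(p+1) process is maximized by c_{p+1} = c_{p+1}^{MaxEnt} + (α − sign(α)√(α²−1))·σ², where c_{p+1}^{MaxEnt} = −Σ_{ℓ=1}^{p} a_ℓ c_{p+1−ℓ} and α = (Σ_{ℓ=0}^{p} a_ℓ²)/(Σ_{ℓ=1}^{p} a_ℓ a_{p+1−ℓ}). -/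
open Matrix Finset

/-- The covariance sequence c with the value at lag p+1 set to x. -/
def cExt (c : ℕ → ℝ) (p : ℕ) (x : ℝ) : ℕ → ℝ := fun k => if k = p + 1 then x else c k

/- ------------------- auxiliary material ------------------- -/

/-- The AR(p) coefficient sequence padded with zeros beyond index p. -/
def bseq (a : ℕ → ℝ) (p : ℕ) : ℕ → ℝ := fun ℓ => if ℓ ≤ p then a ℓ else 0

lemma icc_range (n : ℕ) (f : ℕ → ℝ) :
    ∑ i ∈ Finset.Icc 1 n, f i = ∑ i ∈ Finset.range n, f (1+i) := by
  rw [← Finset.Ico_add_one_right_eq_Icc, Finset.sum_Ico_eq_sum_range]; simp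

lemma final_ineq (A B σ2 t s : ℝ) (hσ : 0 < σ2)
    (h1 : 1 ≤ 2*A - 2*B) (h2 : 1 ≤ 2*A + 2*B)
    (hq : B*s^2 - 2*A*s + B = 0) (hs : s^2 ≤ 1) :
    σ2*(1-t^2)/((1+t^2)*A - 2*t*B) ≤ σ2*(1-s^2)/((1+s^2)*A - 2*s*B) := by
  have hA : (0:ℝ) < A := by nlinarith
  have hDt : 0 < (1+t^2)*A - 2*t*B := by nlinarith [sq_nonneg (t-1), sq_nonneg (t+1), sq_nonneg t]
  have hDs : 0 < (1+s^2)*A - 2*s*B := by nlinarith [sq_nonneg (s-1), sq_nonneg (s+1), sq_nonneg s]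
  rw [div_le_div_iff₀ hDt hDs]
  have hco : (0:ℝ) ≤ 2*A-2*s*B := by nlinarith [sq_nonneg (s-1), sq_nonneg (s+1)]
  have key : σ2*(1-s^2)*((1+t^2)*A - 2*t*B) - σ2*(1-t^2)*((1+s^2)*A - 2*s*B)
      = σ2*((2*A-2*s*B)*(t-s)^2) := by linear_combination (σ2*(2*s-2*t))*hq
  nlinarith [mul_nonneg hσ.le (mul_nonneg hco (sq_nonneg (t-s)))]

lemma tstar_props (A B α : ℝ) (hB : B ≠ 0)
    (h1 : 1 ≤ 2*A - 2*B) (h2 : 1 ≤ 2*A + 2*B) (hα : α = A / B) :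
    B*(α - Real.sign α * Real.sqrt (α^2-1))^2 - 2*A*(α - Real.sign α * Real.sqrt (α^2-1)) + B = 0
    ∧ (α - Real.sign α * Real.sqrt (α^2-1))^2 ≤ 1 := by
  have hA : (0:ℝ) < A := by nlinarith
  rcases lt_or_gt_of_ne hB with hBneg | hBpos
  · have hαlt : α < -1 := by
      rw [hα, div_lt_iff_of_neg hBneg]; nlinarith
    have hsign : Real.sign α = -1 := Real.sign_of_neg (by linarith)
    have hge : (0:ℝ) ≤ α^2 - 1 := by nlinarith
    have hsq : Real.sqrt (α^2-1) ^ 2 = α^2 - 1 := Real.sq_sqrt hge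
    have hBα : B * α = A := by rw [hα]; field_simp
    set r := Real.sqrt (α^2-1) with hr
    have hrnn : 0 ≤ r := Real.sqrt_nonneg _
    have hrle : r ≤ -α := by
      rw [hr]
      calc Real.sqrt (α^2-1) ≤ Real.sqrt (α^2) := Real.sqrt_le_sqrt (by linarith)
        _ = |α| := Real.sqrt_sq_eq_abs α
        _ = -α := abs_of_neg (by linarith)
    have hrge : -α - 1 ≤ r := by
      rw [hr]
      exact (Real.le_sqrt (by linarith) hge).mpr (by nlinarith)
    constructor
    · rw [hsign]; nlinarith [hsq, hBα]
    · rw [hsign]; nlinarith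
  · have hαgt : 1 < α := by rw [hα, lt_div_iff₀ hBpos]; nlinarith
    have hsign : Real.sign α = 1 := Real.sign_of_pos (by linarith)
    have hge : (0:ℝ) ≤ α^2 - 1 := by nlinarith
    have hsq : Real.sqrt (α^2-1) ^ 2 = α^2 - 1 := Real.sq_sqrt hge
    have hBα : B * α = A := by rw [hα]; field_simp
    set r := Real.sqrt (α^2-1) with hr
    have hrnn : 0 ≤ r := Real.sqrt_nonneg _
    have hrle : r ≤ α := by
      rw [hr]
      calc Real.sqrt (α^2-1) ≤ Real.sqrt (α^2) := Real.sqrt_le_sqrt (by linarith)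
        _ = |α| := Real.sqrt_sq_eq_abs α
        _ = α := abs_of_pos (by linarith)
    have hrge : α - 1 ≤ r := by
      rw [hr]
      exact (Real.le_sqrt (by linarith) hge).mpr (by nlinarith)
    constructor
    · rw [hsign]; nlinarith [hsq, hBα]
    · rw [hsign]; nlinarith

section KeySum
variable (p : ℕ) (a c : ℕ → ℝ) (σ2 x cME t : ℝ)

lemma hT1 (ha0 : a 0 = 1)
    (hYWn : ∀ i, i ≤ p → ∑ j ∈ range (p+1), c ((i:ℤ) - (j:ℤ)).natAbs * a j = if i = 0 then σ2 else 0)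
    (hcME : cME = -∑ ℓ ∈ Finset.Icc 1 p, a ℓ * c (p + 1 - ℓ)) :
    ∀ i ≤ p+1, ∑ j ∈ range (p+2), cExt c p x ((i:ℤ)-(j:ℤ)).natAbs * bseq a p j
      = if i = 0 then σ2 else if i = p+1 then x - cME else 0 := by
  intro i hi
  simp only [bseq]
  rw [Finset.sum_range_succ]
  simp only [show ¬ (p+1 ≤ p) by omega, if_false, mul_zero, add_zero]
  by_cases hip : i ≤ p
  · have : ∀ j ∈ range (p+1), cExt c p x ((i:ℤ)-(j:ℤ)).natAbs * (if j ≤ p then a j else 0)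
        = c ((i:ℤ)-(j:ℤ)).natAbs * a j := by
      intro j hj
      rw [Finset.mem_range] at hj
      have hne : ((i:ℤ)-(j:ℤ)).natAbs ≠ p+1 := by omega
      rw [if_pos (by omega), cExt, if_neg hne]
    rw [Finset.sum_congr rfl this, hYWn i hip]
    have : i ≠ p+1 := by omega
    simp [this]
  · have hieq : i = p+1 := by omega
    subst hieq
    rw [Finset.sum_range_succ']
    have h0 : cExt c p x (((p+1:ℕ):ℤ)-((0:ℕ):ℤ)).natAbs * (if (0:ℕ) ≤ p then a 0 else 0) = x := by
      have : (((p+1:ℕ):ℤ)-((0:ℕ):ℤ)).natAbs = p+1 := by omega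
      rw [this, if_pos (by omega), ha0, cExt]; simp
    rw [h0]
    have hrest : ∀ k ∈ range p, cExt c p x (((p+1:ℕ):ℤ)-((k+1:ℕ):ℤ)).natAbs * (if k+1 ≤ p then a (k+1) else 0)
        = c (p-k) * a (k+1) := by
      intro k hk
      rw [Finset.mem_range] at hk
      have h1 : (((p+1:ℕ):ℤ)-((k+1:ℕ):ℤ)).natAbs = p - k := by omega
      rw [h1, if_pos (by omega), cExt, if_neg (by omega)]
    rw [Finset.sum_congr rfl hrest]
    have hC : -cME = ∑ k ∈ range p, c (p-k) * a (k+1) := by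
      rw [hcME, neg_neg, icc_range]
      apply Finset.sum_congr rfl
      intro k hk
      rw [Finset.mem_range] at hk
      have : p + 1 - (1+k) = p - k := by omega
      rw [this, add_comm 1 k, mul_comm]
    simp [show ¬ (p+1=0) by omega, ← hC]
    ring

lemma hT2 (ha0 : a 0 = 1)
    (hYWn : ∀ i, i ≤ p → ∑ j ∈ range (p+1), c ((i:ℤ) - (j:ℤ)).natAbs * a j = if i = 0 then σ2 else 0)
    (hcME : cME = -∑ ℓ ∈ Finset.Icc 1 p, a ℓ * c (p + 1 - ℓ)) :
    ∀ i ≤ p+1, ∑ j ∈ range (p+2), cExt c p x ((i:ℤ)-(j:ℤ)).natAbs * bseq a p (p+1-j)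
      = if i = p+1 then σ2 else if i = 0 then x - cME else 0 := by
  intro i hi
  set F : ℕ → ℝ := fun j => cExt c p x (((p+1-i:ℕ):ℤ)-(j:ℤ)).natAbs * bseq a p j with hF
  have step1 : ∑ j ∈ range (p+2), cExt c p x ((i:ℤ)-(j:ℤ)).natAbs * bseq a p (p+1-j)
      = ∑ j ∈ range (p+2), F (p+2-1-j) := by
    apply Finset.sum_congr rfl
    intro j hj
    rw [Finset.mem_range] at hj
    rw [hF]
    simp only
    have h2 : p+2-1-j = p+1-j := by omega
    rw [h2]
    have h3 : (((p+1-i:ℕ):ℤ)-(((p+1-j:ℕ)):ℤ)).natAbs = ((i:ℤ)-(j:ℤ)).natAbs := by omega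
    rw [h3]
  rw [step1, Finset.sum_range_reflect]
  have := hT1 p a c σ2 x cME ha0 hYWn hcME (p+1-i) (by omega)
  rw [this]
  rcases Nat.eq_or_lt_of_le hi with h | h
  · simp [h.symm ▸ (by omega : p+1-(p+1) = 0), show p+1-i = 0 by omega, h]
  · by_cases h0 : i = 0
    · simp [h0, show p+1-0 = p+1 by omega, show (0:ℕ) ≠ p+1 by omega]
    · simp [show p+1-i ≠ 0 by omega, show p+1-i ≠ p+1 by omega, h0, show i ≠ p+1 by omega]

lemma key_sum_s17 (ha0 : a 0 = 1)
    (hYWn : ∀ i, i ≤ p → ∑ j ∈ range (p+1), c ((i:ℤ) - (j:ℤ)).natAbs * a j = if i = 0 then σ2 else 0)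
    (hcME : cME = -∑ ℓ ∈ Finset.Icc 1 p, a ℓ * c (p + 1 - ℓ))
    (ht : x - cME = t * σ2) :
    ∀ i ≤ p+1, ∑ j ∈ range (p+2), cExt c p x ((i:ℤ)-(j:ℤ)).natAbs *
        (bseq a p j - t * bseq a p (p+1-j))
      = if i = 0 then σ2*(1-t^2) else 0 := by
  intro i hi
  have expand : ∀ j ∈ range (p+2), cExt c p x ((i:ℤ)-(j:ℤ)).natAbs *
        (bseq a p j - t * bseq a p (p+1-j))
      = cExt c p x ((i:ℤ)-(j:ℤ)).natAbs * bseq a p j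
        - t * (cExt c p x ((i:ℤ)-(j:ℤ)).natAbs * bseq a p (p+1-j)) := by
    intro j _; ring
  rw [Finset.sum_congr rfl expand, Finset.sum_sub_distrib, ← Finset.mul_sum,
    hT1 p a c σ2 x cME ha0 hYWn hcME i hi, hT2 p a c σ2 x cME ha0 hYWn hcME i hi]
  by_cases h0 : i = 0
  · subst h0
    rw [if_pos rfl, if_pos rfl, if_neg (show (0:ℕ) ≠ p+1 by omega), if_pos rfl, ht]
    ring
  · by_cases h1 : i = p+1
    · subst h1
      rw [if_neg (show p+1 ≠ 0 by omega), if_pos rfl, if_pos rfl,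
        if_neg (show p+1 ≠ 0 by omega), ht]
      ring
    · simp [h0, h1]

end KeySum

/- ------------------- main theorem ------------------- -/

/-- given a stable AR(p) process (a_0 = 1, a_p ≠ 0, innovation variance σ²,
Yule–Walker: C_{p+1}·a = σ²e₁, C_{p+1} positive definite), among all admissible covariance
extensions c_{p+1} = x (i.e. those yielding a positive definite C_{p+2} and hence an AR
process of order at most p+1, with coefficients a' and innovation variance σ'² solving the
extended Yule–Walker equations), the two-sided prediction LMMSE σ'²/Σ(a'_ℓ)² is maximized
by x = c_{p+1}^{MaxEnt} + (α − sign(α)√(α²−1))·σ², where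
c_{p+1}^{MaxEnt} = −Σ_{ℓ=1}^{p} a_ℓ c_{p+1−ℓ} and
α = (Σ_{ℓ=0}^{p} a_ℓ²)/(Σ_{ℓ=1}^{p} a_ℓ a_{p+1−ℓ}). -/
theorem maxTSP_completion (p : ℕ) (hp : 0 < p) (a : ℕ → ℝ) (σ2 : ℝ) (c : ℕ → ℝ)
    (ha0 : a 0 = 1) (hap : a p ≠ 0) (hσ : 0 < σ2)
    (hPD : (toeplitz c (p + 1)).PosDef)
    (hYW : ∀ i : Fin (p + 1),
      ∑ j : Fin (p + 1), toeplitz c (p + 1) i j * a (j : ℕ) = if i = 0 then σ2 else 0)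
    (hden : ∑ ℓ ∈ Finset.Icc 1 p, a ℓ * a (p + 1 - ℓ) ≠ 0)
    (α : ℝ)
    (hα : α = (∑ ℓ ∈ Finset.range (p + 1), a ℓ ^ 2) /
      (∑ ℓ ∈ Finset.Icc 1 p, a ℓ * a (p + 1 - ℓ)))
    (cME cstar : ℝ)
    (hcME : cME = -∑ ℓ ∈ Finset.Icc 1 p, a ℓ * c (p + 1 - ℓ))
    (hcstar : cstar = cME + (α - Real.sign α * Real.sqrt (α ^ 2 - 1)) * σ2) :
    ∀ (x : ℝ), (toeplitz (cExt c p x) (p + 2)).PosDef →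
      ∀ (a' : ℕ → ℝ) (σ'2 : ℝ), a' 0 = 1 →
        (∀ i : Fin (p + 2),
          ∑ j : Fin (p + 2), toeplitz (cExt c p x) (p + 2) i j * a' (j : ℕ) =
            if i = 0 then σ'2 else 0) →
      ∀ (astar : ℕ → ℝ) (σstar2 : ℝ), astar 0 = 1 →
        (∀ i : Fin (p + 2),
          ∑ j : Fin (p + 2), toeplitz (cExt c p cstar) (p + 2) i j * astar (j : ℕ) =
            if i = 0 then σstar2 else 0) →
        σ'2 / (∑ ℓ ∈ Finset.range (p + 2), a' ℓ ^ 2) ≤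
          σstar2 / (∑ ℓ ∈ Finset.range (p + 2), astar ℓ ^ 2) := by
  intro x _hPDx a' σ'2 ha'0 hYW' astar σstar2 hastar0 hYWstar
  set A := ∑ ℓ ∈ Finset.range (p + 1), a ℓ ^ 2 with hAdef
  set B := ∑ ℓ ∈ Finset.Icc 1 p, a ℓ * a (p + 1 - ℓ) with hBdef
  -- nat-indexed Yule-Walker for the base process
  have hYWn : ∀ i, i ≤ p → ∑ j ∈ range (p+1), c ((i:ℤ) - (j:ℤ)).natAbs * a j
      = if i = 0 then σ2 else 0 := by
    intro i hi
    have h := hYW ⟨i, by omega⟩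
    rw [← Fin.sum_univ_eq_sum_range (fun j => c ((i:ℤ) - (j:ℤ)).natAbs * a j) (p+1)]
    convert h using 2 with j
    · simp [Fin.ext_iff, toeplitz]
    · simp [Fin.ext_iff]
  -- basic sums involving bseq
  have hSb : ∑ j ∈ range (p+2), bseq a p j ^ 2 = A := by
    rw [Finset.sum_range_succ]
    simp only [bseq, show ¬ (p+1 ≤ p) by omega, if_false]
    rw [hAdef]
    have : ∀ j ∈ range (p+1), (if j ≤ p then a j else 0) ^ 2 = a j ^ 2 := by
      intro j hj; rw [Finset.mem_range] at hj; rw [if_pos (by omega)]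
    rw [Finset.sum_congr rfl this]
    ring
  have hSrev : ∑ j ∈ range (p+2), bseq a p (p+1-j) ^ 2 = A := by
    have h := Finset.sum_range_reflect (fun j => bseq a p j ^ 2) (p+2)
    have h2 : ∀ j ∈ range (p+2), bseq a p (p+2-1-j) ^ 2 = bseq a p (p+1-j) ^ 2 := by
      intro j _
      have hj2 : p+2-1-j = p+1-j := by omega
      rw [hj2]
    rw [← Finset.sum_congr rfl h2, h, hSb]
  have hScross : ∑ j ∈ range (p+2), bseq a p j * bseq a p (p+1-j) = B := by
    rw [Finset.sum_range_succ, Finset.sum_range_succ']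
    have e1 : bseq a p (p+1) * bseq a p (p+1-(p+1)) = 0 := by
      simp [bseq, show ¬ (p+1 ≤ p) by omega]
    have e2 : bseq a p 0 * bseq a p (p+1-0) = 0 := by
      simp [bseq, show ¬ (p+1 ≤ p) by omega]
    rw [e1, e2, hBdef, icc_range]
    have : ∀ k ∈ range p, bseq a p (k+1) * bseq a p (p+1-(k+1)) = a (1+k) * a (p+1-(1+k)) := by
      intro k hk
      rw [Finset.mem_range] at hk
      simp only [bseq, if_pos (show k+1 ≤ p by omega), if_pos (show p+1-(k+1) ≤ p by omega)]
      rw [show k+1 = 1+k by omega]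
    rw [Finset.sum_congr rfl this]
    ring
  have habs : ∀ (s : ℝ), s = 1 ∨ s = -1 →
      1 ≤ 2*A - s*(2*B) := by
    intro s hs
    have hexp : ∀ j ∈ range (p+2), (bseq a p j - s * bseq a p (p+1-j))^2
        = bseq a p j ^2 + s^2*(bseq a p (p+1-j)^2) - s*(2*(bseq a p j * bseq a p (p+1-j))) := by
      intro j _; ring
    have hsum : ∑ j ∈ range (p+2), (bseq a p j - s * bseq a p (p+1-j))^2
        = 2*A - s*(2*B) := by
      rw [Finset.sum_congr rfl hexp, Finset.sum_sub_distrib, Finset.sum_add_distrib,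
        ← Finset.mul_sum, ← Finset.mul_sum, ← Finset.mul_sum, hSb, hSrev, hScross]
      rcases hs with h | h <;> rw [h] <;> ring
    have h0mem : (0:ℕ) ∈ range (p+2) := by simp
    have hterm : (bseq a p 0 - s * bseq a p (p+1-0))^2 = 1 := by
      simp [bseq, show ¬ (p+1 ≤ p) by omega, ha0]
    calc (1:ℝ) = (bseq a p 0 - s * bseq a p (p+1-0))^2 := hterm.symm
      _ ≤ ∑ j ∈ range (p+2), (bseq a p j - s * bseq a p (p+1-j))^2 :=
          Finset.single_le_sum (f := fun j => (bseq a p j - s * bseq a p (p+1-j))^2)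
            (fun j _ => sq_nonneg _) h0mem
      _ = 2*A - s*(2*B) := hsum
  have h2AB1 : 1 ≤ 2*A - 2*B := by have := habs 1 (Or.inl rfl); linarith
  have h2AB2 : 1 ≤ 2*A + 2*B := by have := habs (-1) (Or.inr rfl); linarith
  -- the master analysis of any admissible solution
  have main : ∀ (y : ℝ) (t : ℝ), y - cME = t * σ2 → ∀ (w : ℕ → ℝ) (s2 : ℝ), w 0 = 1 →
      (∀ i : Fin (p + 2), ∑ j : Fin (p + 2), toeplitz (cExt c p y) (p + 2) i j * w (j : ℕ)
        = if i = 0 then s2 else 0) →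
      s2 = σ2*(1-t^2) ∧ (∑ ℓ ∈ Finset.range (p + 2), w ℓ ^ 2) = (1+t^2)*A - 2*t*B := by
    intro y t ht w s2 hw0 hYWw
    have hYWwn : ∀ i, i ≤ p+1 → ∑ j ∈ range (p+2), cExt c p y ((i:ℤ)-(j:ℤ)).natAbs * w j
        = if i = 0 then s2 else 0 := by
      intro i hi
      have h := hYWw ⟨i, by omega⟩
      rw [← Fin.sum_univ_eq_sum_range (fun j => cExt c p y ((i:ℤ)-(j:ℤ)).natAbs * w j) (p+2)]
      convert h using 2 with j
      · simp [Fin.ext_iff, toeplitz]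
      · simp [Fin.ext_iff]
    have hkey := key_sum_s17 p a c σ2 y cME t ha0 hYWn hcME ht
    set un : ℕ → ℝ := fun ℓ => w ℓ - (bseq a p ℓ - t * bseq a p (p+1-ℓ)) with hun
    have hun0 : un 0 = 0 := by
      simp [hun, bseq, hw0, ha0, show ¬ (p+1 ≤ p) by omega, show p+1-0 = p+1 by omega]
    have hMu : ∀ i, i ≤ p+1 → ∑ j ∈ range (p+2), cExt c p y ((i:ℤ)-(j:ℤ)).natAbs * un j
        = if i = 0 then s2 - σ2*(1-t^2) else 0 := by
      intro i hi
      have hexp : ∀ j ∈ range (p+2), cExt c p y ((i:ℤ)-(j:ℤ)).natAbs * un j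
          = cExt c p y ((i:ℤ)-(j:ℤ)).natAbs * w j
            - cExt c p y ((i:ℤ)-(j:ℤ)).natAbs * (bseq a p j - t * bseq a p (p+1-j)) := by
        intro j _; simp [hun]; ring
      rw [Finset.sum_congr rfl hexp, Finset.sum_sub_distrib, hYWwn i hi, hkey i hi]
      by_cases h0 : i = 0 <;> simp [h0]
    have hQ0 : ∑ i ∈ range (p+2), un i * ∑ j ∈ range (p+2),
        cExt c p y ((i:ℤ)-(j:ℤ)).natAbs * un j = 0 := by
      apply Finset.sum_eq_zero
      intro i hi
      rw [Finset.mem_range] at hi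
      rw [hMu i (by omega)]
      by_cases h0 : i = 0
      · subst h0; rw [hun0]; ring
      · simp [h0]
    have hinner : ∀ i, i ≤ p → ∑ j ∈ range (p+2), cExt c p y (((i+1:ℕ):ℤ)-(j:ℤ)).natAbs * un j
        = ∑ j ∈ range (p+1), c ((i:ℤ)-(j:ℤ)).natAbs * un (j+1) := by
      intro i hi
      rw [Finset.sum_range_succ', hun0]
      simp only [mul_zero, add_zero]
      apply Finset.sum_congr rfl
      intro j hj
      rw [Finset.mem_range] at hj
      have h1 : (((i+1:ℕ):ℤ) - ((j+1:ℕ):ℤ)).natAbs = ((i:ℤ) - (j:ℤ)).natAbs := by omega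
      rw [h1]
      congr 1
      simp only [cExt]
      rw [if_neg (by omega)]
    have hQ2 : ∑ i ∈ range (p+1), un (i+1) * ∑ j ∈ range (p+1),
        c ((i:ℤ)-(j:ℤ)).natAbs * un (j+1) = 0 := by
      rw [Finset.sum_range_succ', hun0] at hQ0
      simp only [zero_mul, add_zero] at hQ0
      rw [← hQ0]
      apply Finset.sum_congr rfl
      intro i hi
      rw [Finset.mem_range] at hi
      rw [hinner i (by omega)]
    have hv : ∀ k, k ≤ p → un (k+1) = 0 := by
      by_contra hcon
      push_neg at hcon
      obtain ⟨k, hk, hkne⟩ := hcon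
      set v : Fin (p+1) → ℝ := fun i => un ((i:ℕ)+1) with hvdef
      have hvne : v ≠ 0 := by
        intro hveq
        apply hkne
        have := congrFun hveq ⟨k, by omega⟩
        simpa [hvdef] using this
      have hpos := _hPDx  -- unused; use hPD
      have hposQ := hPD.dotProduct_mulVec_pos hvne
      have hform : star v ⬝ᵥ (toeplitz c (p+1) *ᵥ v)
          = ∑ i ∈ range (p+1), un (i+1) * ∑ j ∈ range (p+1), c ((i:ℤ)-(j:ℤ)).natAbs * un (j+1) := by
        rw [← Fin.sum_univ_eq_sum_range
          (fun i => un (i+1) * ∑ j ∈ range (p+1), c ((i:ℤ)-(j:ℤ)).natAbs * un (j+1)) (p+1)]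
        simp only [dotProduct, Matrix.mulVec, star_trivial]
        apply Finset.sum_congr rfl
        intro i _
        congr 1
        rw [← Fin.sum_univ_eq_sum_range (fun j => c (((i:ℕ):ℤ)-(j:ℤ)).natAbs * un (j+1)) (p+1)]
        apply Finset.sum_congr rfl
        intro j _
        rfl
      rw [hform, hQ2] at hposQ
      exact lt_irrefl 0 hposQ
    have hweq : ∀ ℓ, ℓ ≤ p+1 → w ℓ = bseq a p ℓ - t * bseq a p (p+1-ℓ) := by
      intro ℓ hℓ
      have : un ℓ = 0 := by
        rcases Nat.eq_zero_or_pos ℓ with h | h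
        · rw [h]; exact hun0
        · have : ℓ - 1 + 1 = ℓ := by omega
          rw [← this]; exact hv (ℓ-1) (by omega)
      simp only [hun] at this
      linarith [this]
    constructor
    · have h0 := hYWwn 0 (by omega)
      rw [if_pos rfl] at h0
      have h1 := hkey 0 (by omega)
      rw [if_pos rfl] at h1
      rw [← h0, ← h1]
      apply Finset.sum_congr rfl
      intro j hj
      rw [Finset.mem_range] at hj
      rw [hweq j (by omega)]
    · have hexp : ∀ j ∈ range (p+2), w j ^ 2
          = bseq a p j ^2 + t^2*(bseq a p (p+1-j)^2) - t*(2*(bseq a p j * bseq a p (p+1-j))) := by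
        intro j hj
        rw [Finset.mem_range] at hj
        rw [hweq j (by omega)]; ring
      rw [Finset.sum_congr rfl hexp, Finset.sum_sub_distrib, Finset.sum_add_distrib,
        ← Finset.mul_sum, ← Finset.mul_sum, ← Finset.mul_sum, hSb, hSrev, hScross]
      ring
  -- apply to both extensions
  have hσne : σ2 ≠ 0 := ne_of_gt hσ
  obtain ⟨he1, he2⟩ := main x ((x-cME)/σ2) (by field_simp) a' σ'2 ha'0 hYW'
  obtain ⟨hf1, hf2⟩ := main cstar (α - Real.sign α * Real.sqrt (α^2-1))
    (by rw [hcstar]; ring) astar σstar2 hastar0 hYWstar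
  obtain ⟨hq, hsle⟩ := tstar_props A B α hden h2AB1 h2AB2 hα
  rw [he1, he2, hf1, hf2]
  exact final_ineq A B σ2 _ _ hσ h2AB1 h2AB2 hq hsle
end
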